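/- arXiv:2603.04344 — 2 statements merged into one kernel-verified Lean document; each statement's English description precedes it below -/
import Mathlib

section
/- Let D ≥ 35 and let e be a directed edge of K(2,D) whose edge-word w(e) is an unbordered 7/4⁺-power-free ternary word of length D+1. Then cong(e) > τ(2,D). -/
open scoped BigOperators Classical

namespace Kautz

/-- A vertex of the Kautz digraph `K(d,D)`: a word of length `D` over the
alphabet `{0,1,…,d}` in which adjacent letters are distinct. -/
structure Vertex (d D : ℕ) where
  word : List (Fin (d+1))
  length_eq : word.length = D
  chain : word.Chain' (· ≠ ·)

/-- Adjacency in `K(d,D)`: there is an edge `u → v` iff some word `w` of length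
`D+1` with adjacent letters distinct has `u` as its prefix of length `D` and
`v` as its suffix of length `D`. -/
def Adj {d D : ℕ} (u v : Vertex d D) : Prop :=
  ∃ w : List (Fin (d+1)), w.length = D + 1 ∧ w.Chain' (· ≠ ·) ∧
    u.word = w.dropLast ∧ v.word = w.tail

/-- A directed edge of `K(d,D)`. -/
structure Edge (d D : ℕ) where
  src : Vertex d D
  tgt : Vertex d D
  adj : Adj src tgt

/-- The edge-word `w(e) = a₀a₁⋯a_D` of an edge `e : u → v`, namely `u`
followed by the last letter of `v`. -/
def Edge.word {d D : ℕ} (e : Edge d D) : List (Fin (d+1)) :=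
  e.src.word ++ e.tgt.word.drop (D - 1)

/-- `p` is a walk from `x` to `y`, recorded as the list of successive vertices. -/
def IsWalk {d D : ℕ} (p : List (Vertex d D)) (x y : Vertex d D) : Prop :=
  p.head? = some x ∧ p.getLast? = some y ∧ p.Chain' Adj

/-- Directed graph distance in `K(d,D)`. -/
noncomputable def dist {d D : ℕ} (x y : Vertex d D) : ℕ :=
  sInf {k | ∃ p : List (Vertex d D), IsWalk p x y ∧ p.length = k + 1}

/-- `N(e;k,t)`: the number of ordered pairs `(x,y)` with `dist x y = k` such
that some geodesic (walk of length `k = dist x y`) from `x` to `y` uses `e` as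
its `t`-th edge. -/
noncomputable def N {d D : ℕ} (e : Edge d D) (k t : ℕ) : ℕ :=
  Set.ncard {xy : Vertex d D × Vertex d D |
    dist xy.1 xy.2 = k ∧
    ∃ p : List (Vertex d D), IsWalk p xy.1 xy.2 ∧ p.length = k + 1 ∧
      p[t-1]? = some e.src ∧ p[t]? = some e.tgt}

/-- `U_k(e) = ∑_{t=1}^{k} N(e;k,t)`. -/
noncomputable def U {d D : ℕ} (e : Edge d D) (k : ℕ) : ℕ :=
  ∑ t ∈ Finset.Icc 1 k, N e k t

/-- `cong(e) = ∑_{k=1}^{D} U_k(e)`. -/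
noncomputable def cong {d D : ℕ} (e : Edge d D) : ℕ :=
  ∑ k ∈ Finset.Icc 1 D, U e k

/-- `τ(d,D) = (D−1)·d^{D−2} + D·d^{D−1}`. -/
def tau (d D : ℕ) : ℕ := (D - 1) * d ^ (D - 2) + D * d ^ (D - 1)

/-- A word has a border: some proper nonempty prefix equals the suffix of the
same length. -/
def HasBorder {α : Type*} (w : List α) : Prop :=
  ∃ ℓ, 1 ≤ ℓ ∧ ℓ ≤ w.length - 1 ∧ w.take ℓ = w.drop (w.length - ℓ)

/-- An unbordered word. -/
def Unbordered {α : Type*} (w : List α) : Prop := ¬ HasBorder w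

/-- A square-free word: no nonempty factor of the form `XX`. -/
def SquareFree {α : Type*} (w : List α) : Prop :=
  ¬ ∃ X : List α, X ≠ [] ∧ (X ++ X) <:+: w

/-- A `7/4⁺`-power-free word: no factor `x^k y` with `x` nonempty, `k ≥ 1`,
`y` a prefix of `x`, and `(k·|x| + |y|)/|x| > 7/4`. -/
def SevenFourthsPlusFree {α : Type*} (w : List α) : Prop :=
  ¬ ∃ (x y : List α) (k : ℕ), x ≠ [] ∧ 1 ≤ k ∧ y <+: x ∧
    ((List.replicate k x).flatten ++ y) <:+: w ∧
    7 * x.length < 4 * (k * x.length + y.length)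

/-- A word over `{0,1,…,d}` is ternary if it uses only the letters `{0,1,2}`. -/
def IsTernary {n : ℕ} (w : List (Fin n)) : Prop := ∀ a ∈ w, (a : ℕ) < 3

/-- The suffix of `w` of length `t`. -/
def suffixWord {α : Type*} (w : List α) (t : ℕ) : List α := w.drop (w.length - t)

/-- `R_t(w)`: the set of admissible overlap lengths `r` at position `t`, i.e.
those `r` with `t+1 ≤ r ≤ |w|−t−1` such that `w = A·B·V·B` where `B` is the
suffix of `w` of length `t`, `V` is nonempty, and `|B·V| = r`. -/
noncomputable def Rt {α : Type*} (w : List α) (t : ℕ) : Finset ℕ :=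
  (Finset.Icc (t + 1) (w.length - t - 1)).filter fun r =>
    ∃ A V : List α, V ≠ [] ∧
      w = A ++ suffixWord w t ++ V ++ suffixWord w t ∧ t + V.length = r

/-- The deficit `Δ_t(e) = d^{D−1} − N(e;D,t)`. -/
noncomputable def deficit {d D : ℕ} (e : Edge d D) (t : ℕ) : ℝ :=
  (d : ℝ) ^ (D - 1) - (N e D t : ℝ)

/-- The total deficit `Δ(e) = ∑_{t=1}^{D} Δ_t(e)`. -/
noncomputable def totalDeficit {d D : ℕ} (e : Edge d D) : ℝ :=
  ∑ t ∈ Finset.Icc 1 D, deficit e t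

/-- The weighted overlap count
`Ω_d(e) = ∑_{j=1}^{⌈(D+1)/2⌉} ∑_{r ∈ R_j(w(e))} d^{−(r−j)}`. -/
noncomputable def Omega {d D : ℕ} (e : Edge d D) : ℝ :=
  ∑ j ∈ Finset.Icc 1 ((D + 2) / 2), ∑ r ∈ Rt e.word j, (d : ℝ) ^ ((j : ℤ) - (r : ℤ))

/-- The overlap `ov(u,v)`: the largest `j ≤ D` such that the last `j` letters
of `u` equal the first `j` letters of `v`. -/
noncomputable def ov {d D : ℕ} (u v : Vertex d D) : ℕ :=
  sSup {j | j ≤ D ∧ u.word.drop (D - j) = v.word.take j}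

end Kautz
section Aux
open Kautz List

abbrev A3 := Fin 3

theorem Vertex.ext' {d D : ℕ} {u v : Kautz.Vertex d D} (h : u.word = v.word) : u = v := by
  cases u; cases v; simp_all

instance vertexFinite {d D : ℕ} : Finite (Kautz.Vertex d D) := by
  apply Finite.of_injective
    (fun v : Kautz.Vertex d D => (fun i : Fin D => v.word.get (Fin.cast v.length_eq.symm i)))
  intro u v h
  apply Vertex.ext'
  apply List.ext_get (by rw [u.length_eq, v.length_eq])
  intro i h1 h2
  have := congrFun h ⟨i, by rwa [u.length_eq] at h1⟩
  simpa using this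

/-- Geometric sum over a set with gaps ≥ 2. -/
theorem geo_sum : ∀ (n : ℕ) (M : Finset ℕ), M.card = n → ∀ m0 : ℕ,
    (∀ m ∈ M, m0 ≤ m) → (∀ m ∈ M, m + 1 ∉ M) →
    ∑ m ∈ M, ((2:ℝ)⁻¹) ^ m ≤ (4/3) * (2⁻¹) ^ m0 := by
  intro n
  induction n using Nat.strong_induction_on with
  | _ n ih =>
    intro M hcard m0 hmin hgap
    rcases Nat.eq_zero_or_pos n with hn | hn
    · have : M = ∅ := Finset.card_eq_zero.mp (hcard.trans hn)
      subst this
      simp only [Finset.sum_empty]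
      positivity
    · have hne : M.Nonempty := Finset.card_pos.mp (hcard ▸ hn)
      set m1 := M.min' hne with hm1
      have hm1M : m1 ∈ M := M.min'_mem hne
      have hsum : ∑ m ∈ M, ((2:ℝ)⁻¹) ^ m
          = (2⁻¹)^m1 + ∑ m ∈ M.erase m1, ((2:ℝ)⁻¹) ^ m :=
        (Finset.add_sum_erase M _ hm1M).symm
      have hrest : ∑ m ∈ M.erase m1, ((2:ℝ)⁻¹) ^ m ≤ (4/3) * (2⁻¹) ^ (m1 + 2) := by
        apply ih (n-1) (by omega) _ (by rw [Finset.card_erase_of_mem hm1M, hcard])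
        · intro m hm
          have hmM := Finset.mem_of_mem_erase hm
          have h1 : m1 ≤ m := M.min'_le m hmM
          have h2 : m ≠ m1 := Finset.ne_of_mem_erase hm
          have h3 : m ≠ m1 + 1 := by
            intro h; exact hgap m1 hm1M (h ▸ hmM)
          omega
        · intro m hm
          intro hcon
          exact hgap m (Finset.mem_of_mem_erase hm) (Finset.mem_of_mem_erase hcon)
      have hm0 : ((2:ℝ)⁻¹)^m1 ≤ (2⁻¹)^m0 := by
        apply pow_le_pow_of_le_one (by norm_num) (by norm_num) (hmin m1 hm1M)
      calc ∑ m ∈ M, ((2:ℝ)⁻¹) ^ m = (2⁻¹)^m1 + ∑ m ∈ M.erase m1, ((2:ℝ)⁻¹) ^ m := hsum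
        _ ≤ (2⁻¹)^m1 + (4/3) * (2⁻¹) ^ (m1+2) := by linarith
        _ = (4/3) * (2⁻¹)^m1 := by ring
        _ ≤ (4/3) * (2⁻¹)^m0 := by linarith

/-- Sum of k·2^(k-1). -/
theorem sum_k_pow (n : ℕ) :
    ∑ k ∈ Finset.Icc 1 n, (k : ℝ) * 2 ^ (k-1) = ((n:ℝ) - 1) * 2 ^ n + 1 := by
  induction n with
  | zero => simp
  | succ n ihn =>
    rw [Finset.sum_Icc_succ_top (by omega), ihn]
    push_cast
    ring

theorem sum_ceil3 (k : ℕ) :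
    ∑ t ∈ Finset.Icc 1 k, ((2:ℝ)⁻¹) ^ ((t+2)/3) ≤ 3 := by
  have key : ∀ V : ℕ, ∑ t ∈ Finset.Icc 1 (3*V), ((2:ℝ)⁻¹) ^ ((t+2)/3) ≤ 3 - 3 * (2⁻¹)^V := by
    intro V
    induction V with
    | zero => simp
    | succ V ihV =>
      have h3 : 3 * (V+1) = (3*V + 1) + 1 + 1 := by ring
      rw [h3]
      rw [Finset.sum_Icc_succ_top (by omega), Finset.sum_Icc_succ_top (by omega),
        Finset.sum_Icc_succ_top (by omega)]
      have e1 : (3*V+1+2)/3 = V + 1 := by omega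
      have e2 : (3*V+1+1+2)/3 = V + 1 := by omega
      have e3 : (3*V+1+1+1+2)/3 = V + 1 := by omega
      rw [e1, e2, e3]
      have : ((2:ℝ)⁻¹)^(V+1) = (2⁻¹)^V * 2⁻¹ := pow_succ _ _
      rw [this]
      linarith
  calc ∑ t ∈ Finset.Icc 1 k, ((2:ℝ)⁻¹) ^ ((t+2)/3)
      ≤ ∑ t ∈ Finset.Icc 1 (3*k), ((2:ℝ)⁻¹) ^ ((t+2)/3) := by
        apply Finset.sum_le_sum_of_subset_of_nonneg
        · apply Finset.Icc_subset_Icc_right; omega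
        · intros; positivity
    _ ≤ 3 - 3 * (2⁻¹)^k := key k
    _ ≤ 3 := by
        have : (0:ℝ) ≤ 3 * (2⁻¹)^k := by positivity
        linarith

/-- Chain words over `Fin 3` with a sentinel letter in front. -/
noncomputable def S : ℕ → A3 → Finset (List A3)
  | 0, _ => {[]}
  | (n+1), a => ({a}ᶜ : Finset A3).biUnion (fun b => (S n b).image (b :: ·))

theorem mem_S {n : ℕ} {a : A3} {l : List A3} :
    l ∈ S n a ↔ l.length = n ∧ (a :: l).Chain' (· ≠ ·) := by
  induction n generalizing a l with
  | zero =>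
    simp only [S, Finset.mem_singleton]
    constructor
    · rintro rfl; simp [List.Chain']
    · rintro ⟨h, -⟩; exact List.length_eq_zero_iff.mp h
  | succ n ihn =>
    simp only [S, Finset.mem_biUnion, Finset.mem_image, Finset.mem_compl,
      Finset.mem_singleton]
    constructor
    · rintro ⟨b, hb, r, hr, rfl⟩
      obtain ⟨hlen, hch⟩ := ihn.mp hr
      refine ⟨by simp [hlen], ?_⟩
      rw [List.Chain', List.isChain_cons_cons]
      exact ⟨Ne.symm hb, hch⟩
    · rintro ⟨hlen, hch⟩
      match l with
      | [] => simp at hlen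
      | b :: r =>
        rw [List.Chain', List.isChain_cons_cons] at hch
        exact ⟨b, Ne.symm hch.1, r, ihn.mpr ⟨by simpa using hlen, hch.2⟩, rfl⟩

theorem card_S (n : ℕ) (a : A3) : (S n a).card = 2 ^ n := by
  induction n generalizing a with
  | zero => simp [S]
  | succ n ihn =>
    rw [S, Finset.card_biUnion]
    · have : ∀ b : A3, ((S n b).image (b :: ·)).card = 2 ^ n := by
        intro b
        rw [Finset.card_image_of_injective _ (fun x y h => by injection h), ihn]
      rw [Finset.sum_congr rfl (fun b _ => this b)]
      simp only [Finset.sum_const, smul_eq_mul]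
      have hcard : ({a}ᶜ : Finset A3).card = 2 := by
        rw [Finset.card_compl]
        simp
      rw [hcard]; ring
    · intro b hb c hc hbc
      simp only [Finset.disjoint_left, Finset.mem_image]
      rintro l ⟨r, -, rfl⟩ ⟨r', -, h⟩
      injection h with h1 h2
      exact hbc h1.symm

theorem mem_S_length {n : ℕ} {a : A3} {l : List A3} (h : l ∈ S n a) : l.length = n :=
  (mem_S.mp h).1

theorem mem_S_chain {n : ℕ} {a : A3} {l : List A3} (h : l ∈ S n a) :
    (a :: l).Chain' (· ≠ ·) := (mem_S.mp h).2

/-- Counting chain words with a prescribed (nonempty) prefix. -/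
theorem card_S_filter_prefix (n c : ℕ) (a : A3) (π : List A3)
    (hc1 : 1 ≤ c) (hcn : c ≤ n) :
    ((S n a).filter (fun s => s.take c = π)).card ≤ 2 ^ (n - c) := by
  by_cases hne : ((S n a).filter (fun s => s.take c = π)).Nonempty
  · obtain ⟨s0, hs0⟩ := hne
    rw [Finset.mem_filter] at hs0
    have hπlen : π.length = c := by
      rw [← hs0.2, List.length_take, mem_S_length hs0.1]
      omega
    have hπne : π ≠ [] := by
      intro h; rw [h] at hπlen; simp at hπlen; omega
    calc ((S n a).filter (fun s => s.take c = π)).card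
        ≤ (S (n-c) (π.getLast hπne)).card := by
          apply Finset.card_le_card_of_injOn (fun s => s.drop c)
          · intro s hs
            rw [Finset.mem_coe, Finset.mem_filter] at hs
            obtain ⟨hsS, hstake⟩ := hs
            have hslen := mem_S_length hsS
            have hsch := mem_S_chain hsS
            simp only [Finset.mem_coe]
            rw [mem_S]
            constructor
            · rw [List.length_drop, hslen]
            · have hdecomp : s = π ++ s.drop c := by
                rw [← hstake]; exact (List.take_append_drop c s).symm
              have hch2 : s.Chain' (· ≠ ·) := (List.isChain_cons.mp hsch).2
              rw [hdecomp, List.Chain', List.isChain_append] at hch2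
              rw [List.Chain', List.isChain_cons]
              refine ⟨?_, hch2.2.1⟩
              intro y hy
              exact hch2.2.2 _ (by simp [List.getLast?_eq_getLast hπne]) y hy
          · intro s1 h1 s2 h2 heq
            rw [Finset.mem_coe, Finset.mem_filter] at h1 h2
            have heq' : s1.drop c = s2.drop c := heq
            have : π ++ s1.drop c = π ++ s2.drop c := by rw [heq']
            calc s1 = π ++ s1.drop c := by rw [← h1.2]; exact (List.take_append_drop c s1).symm
              _ = π ++ s2.drop c := this
              _ = s2 := by rw [← h2.2]; exact List.take_append_drop c s2
      _ = 2 ^ (n - c) := card_S _ _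
  · rw [Finset.not_nonempty_iff_eq_empty] at hne
    rw [hne]; positivity

end Aux
section Aux2
open Kautz List

/-- Main consequence of 7/4⁺-power-freeness: a periodic window of length `ℓ`
with period `q` (starting at `a`, fully inside `w`) forces `4ℓ ≤ 3q`. -/
theorem key_period {w : List A3} (h74 : Kautz.SevenFourthsPlusFree w)
    (a q ℓ : ℕ) (hq : 1 ≤ q) (hl : 1 ≤ ℓ) (hbound : a + q + ℓ ≤ w.length)
    (hper : (w.drop a).take ℓ = (w.drop (a+q)).take ℓ) :
    4 * ℓ ≤ 3 * q := by
  by_contra hcon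
  push_neg at hcon
  apply h74
  have hxlen : ((w.drop a).take q).length = q := by
    rw [List.length_take, List.length_drop]; omega
  have hxne : ((w.drop a).take q) ≠ [] := by
    intro h; rw [h] at hxlen; simp at hxlen; omega
  have hinfix : ∀ r : ℕ, ((w.drop a).take r) <:+: w :=
    fun r => ((List.take_prefix _ _).isInfix).trans (List.drop_suffix a w).isInfix
  by_cases hql : q ≤ ℓ
  · -- square case
    have hq2 : (w.drop a).take q = (w.drop (a+q)).take q := by
      have := congrArg (List.take q) hper
      simpa [List.take_take, min_eq_left hql] using this
    have hxx : (w.drop a).take q ++ (w.drop a).take q = (w.drop a).take (q+q) := by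
      rw [List.take_add, List.drop_drop]
      rw [← hq2]
    refine ⟨(w.drop a).take q, [], 2, hxne, by norm_num, List.nil_prefix, ?_, ?_⟩
    · have hflat : (List.replicate 2 ((w.drop a).take q)).flatten ++ ([] : List A3)
          = (w.drop a).take q ++ (w.drop a).take q := by
        simp [List.replicate]
      rw [hflat, hxx]
      exact hinfix _
    · simp [hxlen]; omega
  · -- k = 1 case
    push_neg at hql
    have hylen : ((w.drop a).take ℓ).length = ℓ := by
      rw [List.length_take, List.length_drop]; omega
    have hypre : ((w.drop a).take ℓ) <+: ((w.drop a).take q) := by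
      rw [List.prefix_take_iff]
      exact ⟨List.take_prefix _ _, by omega⟩
    have hxy : (w.drop a).take q ++ (w.drop a).take ℓ = (w.drop a).take (q+ℓ) := by
      rw [List.take_add, List.drop_drop]
      rw [← hper]
    refine ⟨(w.drop a).take q, (w.drop a).take ℓ, 1, hxne, le_refl 1, hypre, ?_, ?_⟩
    · have hflat : (List.replicate 1 ((w.drop a).take q)).flatten ++ ((w.drop a).take ℓ)
          = (w.drop a).take q ++ (w.drop a).take ℓ := by
        simp [List.replicate]
      rw [hflat, hxy]
      exact hinfix _
    · rw [hxlen, hylen]; omega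

theorem no_period {w : List A3} (hub : Kautz.Unbordered w) {D : ℕ}
    (hwlen : w.length = D + 1) (q : ℕ) (hq1 : 1 ≤ q) (hqD : q ≤ D) :
    w.take (D + 1 - q) ≠ w.drop q := by
  intro h
  apply hub
  refine ⟨D + 1 - q, by omega, by omega, ?_⟩
  have h2 : w.length - (D + 1 - q) = q := by omega
  rw [h2]
  exact h

/-- Along a walk of length `i ≤ D`, the suffix of `x` of length `D-i` equals
the prefix of `y` of the same length. -/
theorem walk_overlap {d D : ℕ} : ∀ (p : List (Kautz.Vertex d D)) (i : ℕ)
    (x y : Kautz.Vertex d D),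
    Kautz.IsWalk p x y → p.length = i + 1 → i ≤ D →
    x.word.drop i = y.word.take (D - i) := by
  intro p
  induction p with
  | nil => intro i x y hw hl; simp at hl
  | cons v rest ih =>
    intro i x y hw hl hiD
    obtain ⟨hhead, hlast, hchain⟩ := hw
    have hvx : v = x := by simpa using hhead
    subst hvx
    cases rest with
    | nil =>
      have hi0 : i = 0 := by simp at hl; omega
      subst hi0
      have hvy : v = y := by simpa using hlast
      subst hvy
      rw [List.drop_zero, Nat.sub_zero, List.take_of_length_le (le_of_eq v.length_eq)]
    | cons v' rest' =>
      have hi : 1 ≤ i := by simp at hl; omega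
      have hl' : (v' :: rest').length = (i-1) + 1 := by simp at hl ⊢; omega
      have hadj : Kautz.Adj v v' := (List.isChain_cons_cons.mp hchain).1
      have hw' : Kautz.IsWalk (v' :: rest') v' y :=
        ⟨rfl, by rw [← List.getLast?_cons_cons]; exact hlast, (List.isChain_cons_cons.mp hchain).2⟩
      have hIH := ih (i-1) v' y hw' hl' (by omega)
      obtain ⟨ww, hwwlen, hwwch, hsrc, htgt⟩ := hadj
      have h1 : v.word = ww.take D := by
        rw [hsrc, List.dropLast_eq_take, hwwlen]
        norm_num
      have h2 : v'.word = ww.drop 1 := by rw [htgt, ← List.drop_one]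
      have e1 : 1 + (i - 1) = i := by omega
      have e2 : D - (i-1) = D - i + 1 := by omega
      have h3 : ww.drop i = y.word.take (D - i + 1) := by
        have h4 : ww.drop (1 + (i-1)) = y.word.take (D - (i-1)) := by
          rw [← List.drop_drop, ← h2, hIH]
        rw [e1, e2] at h4
        exact h4
      calc v.word.drop i = (ww.take D).drop i := by rw [h1]
        _ = (ww.drop i).take (D - i) := by rw [List.drop_take]
        _ = (y.word.take (D - i + 1)).take (D - i) := by rw [h3]
        _ = y.word.take (D - i) := by rw [List.take_take, min_eq_left (by omega)]

/-- The `i`-th vertex along the route determined by appending `z` to `x`. -/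
noncomputable def routeV {d D : ℕ} (x : Kautz.Vertex d D) (z : List (Fin (d+1)))
    (hch : (x.word ++ z).Chain' (· ≠ ·)) (i : ℕ) : Kautz.Vertex d D :=
  if h : i ≤ z.length then
    { word := ((x.word ++ z).drop i).take D
      length_eq := by
        rw [List.length_take, List.length_drop, List.length_append, x.length_eq]; omega
      chain := hch.infix
        (((List.take_prefix _ _).isInfix).trans (List.drop_suffix _ _).isInfix) }
  else x

theorem routeV_word {d D : ℕ} (x : Kautz.Vertex d D) (z : List (Fin (d+1)))
    (hch : (x.word ++ z).Chain' (· ≠ ·)) {i : ℕ} (h : i ≤ z.length) :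
    (routeV x z hch i).word = ((x.word ++ z).drop i).take D := by
  rw [routeV, dif_pos h]

theorem routeV_zero {d D : ℕ} (x : Kautz.Vertex d D) (z : List (Fin (d+1)))
    (hch : (x.word ++ z).Chain' (· ≠ ·)) : routeV x z hch 0 = x := by
  apply Vertex.ext'
  rw [routeV_word x z hch (Nat.zero_le _), List.drop_zero,
    List.take_append_of_le_length (le_of_eq x.length_eq.symm),
    List.take_of_length_le (le_of_eq x.length_eq)]

theorem route_walk {d D : ℕ} (x : Kautz.Vertex d D) (z : List (Fin (d+1)))
    (hch : (x.word ++ z).Chain' (· ≠ ·)) :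
    ∃ p : List (Kautz.Vertex d D),
      Kautz.IsWalk p x (routeV x z hch z.length) ∧ p.length = z.length + 1 ∧
      ∀ i ≤ z.length, p[i]? = some (routeV x z hch i) := by
  have hXlen : (x.word ++ z).length = D + z.length := by
    rw [List.length_append, x.length_eq]
  refine ⟨(List.range (z.length+1)).map (routeV x z hch), ⟨?_, ?_, ?_⟩, by simp, ?_⟩
  · -- head
    rw [List.head?_eq_getElem?, List.getElem?_map, List.getElem?_range (by omega)]
    simp only [Option.map_some]
    rw [routeV_zero]
  · -- last
    rw [List.getLast?_eq_getElem?]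
    simp only [List.length_map, List.length_range, Nat.add_sub_cancel]
    rw [List.getElem?_map, List.getElem?_range (by omega)]
    rfl
  · -- chain
    rw [List.Chain', List.isChain_map]
    have h1 : z.length + 1 = Nat.succ z.length := rfl
    rw [h1, List.isChain_range_succ]
    intro m hm
    refine ⟨((x.word ++ z).drop m).take (D+1), ?_, ?_, ?_, ?_⟩
    · rw [List.length_take, List.length_drop, hXlen]; omega
    · exact hch.infix
        (((List.take_prefix _ _).isInfix).trans (List.drop_suffix _ _).isInfix)
    · rw [routeV_word x z hch (by omega : m ≤ z.length)]
      rw [List.dropLast_eq_take, List.length_take, List.length_drop, hXlen,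
        List.take_take]
      congr 1
      all_goals omega
    · rw [routeV_word x z hch (by omega : m + 1 ≤ z.length)]
      rw [← List.drop_one, List.drop_take, List.drop_drop]
      congr 1
      all_goals omega
  · intro i hi
    rw [List.getElem?_map, List.getElem?_range (by omega)]
    rfl

/-- Distance computation from a route with no shortcuts. -/
theorem dist_eq_of {d D : ℕ} (x y : Kautz.Vertex d D) (k : ℕ) (hkD : k ≤ D)
    (z : List (Fin (d+1))) (hzlen : z.length = k)
    (hch : (x.word ++ z).Chain' (· ≠ ·))
    (hy : y.word = (x.word ++ z).drop k)
    (hno : ∀ m, D - k + 1 ≤ m → m ≤ D → x.word.drop (D - m) ≠ y.word.take m) :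
    Kautz.dist x y = k ∧ ∃ p, Kautz.IsWalk p x y ∧ p.length = k + 1 ∧
      ∀ i ≤ k, p[i]? = some (routeV x z hch i) := by
  have hyr : routeV x z hch z.length = y := by
    apply Vertex.ext'
    rw [routeV_word x z hch (le_refl _), hy, hzlen]
    apply List.take_of_length_le
    rw [List.length_drop, List.length_append, x.length_eq]
    omega
  obtain ⟨p, hwalk, hplen, hpidx⟩ := route_walk x z hch
  rw [hyr] at hwalk
  rw [hzlen] at hplen hpidx
  have hmem : k ∈ {j | ∃ p : List (Kautz.Vertex d D), Kautz.IsWalk p x y ∧ p.length = j + 1} :=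
    ⟨p, hwalk, hplen⟩
  constructor
  · apply _root_.le_antisymm
    · exact Nat.sInf_le hmem
    · apply le_csInf ⟨k, hmem⟩
      intro b hb
      by_contra hbk
      push_neg at hbk
      obtain ⟨pb, hwb, hlb⟩ := hb
      have hov := walk_overlap pb b x y hwb hlb (by omega)
      have hm := hno (D - b) (by omega) (by omega)
      rw [(by omega : D - (D - b) = b)] at hm
      exact hm hov
  · exact ⟨p, hwalk, hplen, hpidx⟩

end Aux2
section Aux3
open Kautz List

noncomputable def toVertex {d D : ℕ} (dflt : Kautz.Vertex d D) (l : List (Fin (d+1))) :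
    Kautz.Vertex d D :=
  if h : l.length = D ∧ l.Chain' (· ≠ ·) then ⟨l, h.1, h.2⟩ else dflt

theorem toVertex_word {d D : ℕ} (dflt : Kautz.Vertex d D) {l : List (Fin (d+1))}
    (h1 : l.length = D) (h2 : l.Chain' (· ≠ ·)) : (toVertex dflt l).word = l := by
  rw [toVertex, dif_pos (⟨h1, h2⟩ : l.length = D ∧ l.Chain' (· ≠ ·))]

theorem pow2_le_pow2 (a b a' b' : ℕ) (h : a + b' ≤ a' + b) :
    (2:ℝ)^a * (2⁻¹)^b ≤ (2:ℝ)^a' * (2⁻¹)^b' := by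
  rw [inv_pow, inv_pow, ← div_eq_mul_inv, ← div_eq_mul_inv,
    div_le_div_iff₀ (by positivity) (by positivity), ← pow_add, ← pow_add]
  exact pow_le_pow_right₀ (by norm_num) h

theorem head?_append_left {α : Type*} {l₁ : List α} (l₂ : List α) (h : l₁ ≠ []) :
    (l₁ ++ l₂).head? = l₁.head? := by
  cases l₁ <;> simp_all

theorem edge_word_facts {d D : ℕ} (e : Kautz.Edge d D) (hD : 1 ≤ D) :
    e.src.word = e.word.dropLast ∧ e.tgt.word = e.word.tail ∧
    e.word.Chain' (· ≠ ·) ∧ e.word.length = D + 1 := by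
  obtain ⟨w', hL, hC, hs, ht'⟩ := e.adj
  have hwe : e.word = w' := by
    rw [Kautz.Edge.word, hs, ht']
    have h1 : w'.tail.drop (D-1) = w'.drop D := by
      rw [← List.drop_one, List.drop_drop]
      congr 1
      omega
    rw [h1, List.dropLast_eq_take, hL]
    have h2 : D + 1 - 1 = D := by omega
    rw [h2, List.take_append_drop]
  rw [hwe]
  exact ⟨hs, ht', hC, hL⟩
end Aux3
section Aux4
open Kautz List

set_option maxHeartbeats 1000000 in
theorem N_lower (D : ℕ) (e : Kautz.Edge 2 D) (hD : 1 ≤ D)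
    (hub : Kautz.Unbordered e.word)
    (h74 : Kautz.SevenFourthsPlusFree e.word)
    (k t : ℕ) (ht1 : 1 ≤ t) (htk : t ≤ k) (hkD : k ≤ D) :
    (2:ℝ) ^ (k-1) ≤ (Kautz.N e k t : ℝ) + (4/3) * 2^(k-1) *
      ((2⁻¹)^((D-k) + (t+2)/3) + (2⁻¹)^((D-k) + (k+1-t+2)/3)) := by
  classical
  obtain ⟨hsrcw, htgtw, hwch, hwl⟩ := edge_word_facts e hD
  set w : List A3 := e.word with hw
  have hwne : w ≠ [] := by
    intro h; rw [h] at hwl; simp at hwl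
  set w0 : A3 := w.head hwne with hw0
  set wL : A3 := w.getLast hwne with hwL
  set PF : Finset (List A3) := (S (t-1) w0).image List.reverse with hPF
  set sS : Finset (List A3) := S (k-t) wL with hsS
  set Pairs : Finset (List A3 × List A3) := PF ×ˢ sS with hPairs
  set Ov : (List A3 × List A3) → ℕ → Prop :=
    (fun Ps m => (Ps.1 ++ w.take (D+1-t)).drop (D - m)
      = (w.drop (k+1-t) ++ Ps.2).take m) with hOvdef
  set Gd : Finset (List A3 × List A3) :=
    Pairs.filter (fun Ps => ∀ m, D-k+1 ≤ m → m ≤ D → ¬ Ov Ps m) with hGddef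
  -- basic facts about members
  have hPfact : ∀ P ∈ PF, P.length = t-1 ∧ P.Chain' (· ≠ ·) ∧
      (∀ a ∈ P.getLast?, a ≠ w0) := by
    intro P hP
    rw [hPF, Finset.mem_image] at hP
    obtain ⟨P0, hP0, rfl⟩ := hP
    obtain ⟨hP0len, hP0ch⟩ := mem_S.mp hP0
    have hrev : (P0.reverse ++ [w0]).reverse = w0 :: P0 := by simp
    have hch2 : (P0.reverse ++ [w0]).Chain' (· ≠ ·) := by
      have h3 := (List.isChain_reverse (l := P0.reverse ++ [w0])).mp (by rw [hrev]; exact hP0ch)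
      exact h3.imp (fun a b hab => Ne.symm hab)
    rw [List.Chain', List.isChain_append] at hch2
    refine ⟨by simp [hP0len], hch2.1, ?_⟩
    intro a ha
    exact hch2.2.2 a ha w0 rfl
  have hsfact : ∀ s ∈ sS, s.length = k-t ∧ s.Chain' (· ≠ ·) ∧
      (∀ b ∈ s.head?, wL ≠ b) := by
    intro s hs
    obtain ⟨hslen, hsch⟩ := mem_S.mp hs
    rw [List.Chain', List.isChain_cons] at hsch
    exact ⟨hslen, hsch.2, hsch.1⟩
  -- chain of the full route word
  have hXchain : ∀ P ∈ PF, ∀ s ∈ sS, (P ++ (w ++ s)).Chain' (· ≠ ·) := by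
    intro P hP s hs
    obtain ⟨hPlen, hPch, hPlast⟩ := hPfact P hP
    obtain ⟨hslen, hsch, hshead⟩ := hsfact s hs
    rw [List.Chain', List.isChain_append]
    refine ⟨hPch, ?_, ?_⟩
    · rw [List.isChain_append]
      refine ⟨hwch, hsch, ?_⟩
      intro a ha b hb
      rw [List.getLast?_eq_getLast hwne] at ha
      have ha2 : wL = a := by simpa [hwL] using ha
      rw [← ha2]
      exact hshead b hb
    · intro a ha b hb
      rw [head?_append_left s hwne, List.head?_eq_head hwne] at hb
      have hb2 : w0 = b := by simpa [hw0] using hb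
      rw [← hb2]
      exact hPlast a ha
  -- length facts
  have hL2len : (w.drop (k+1-t)).length = D-k+t := by
    rw [List.length_drop, hwl]; omega
  have hL1len : (w.take (D+1-t)).length = D+1-t := by
    rw [List.length_take, hwl]; omega
  have hxylen : ∀ P ∈ PF, ∀ s ∈ sS,
      (P ++ w.take (D+1-t)).length = D ∧ (w.drop (k+1-t) ++ s).length = D := by
    intro P hP s hs
    obtain ⟨hPlen, -, -⟩ := hPfact P hP
    obtain ⟨hslen, -, -⟩ := hsfact s hs
    constructor
    · rw [List.length_append, hPlen, hL1len]; omega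
    · rw [List.length_append, hslen, hL2len]; omega
  have hxych : ∀ P ∈ PF, ∀ s ∈ sS,
      (P ++ w.take (D+1-t)).Chain' (· ≠ ·) ∧ (w.drop (k+1-t) ++ s).Chain' (· ≠ ·) := by
    intro P hP s hs
    have hX := hXchain P hP s hs
    constructor
    · apply hX.prefix
      refine ⟨w.drop (D+1-t) ++ s, ?_⟩
      rw [List.append_assoc]
      congr 1
      rw [← List.append_assoc, List.take_append_drop]
    · apply (hX.suffix (List.suffix_append P (w ++ s))).suffix
      refine ⟨w.take (k+1-t), ?_⟩
      rw [← List.append_assoc, List.take_append_drop]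
  -- membership of good pairs in the N-set
  have hGdmem : ∀ Ps ∈ Gd,
      (toVertex e.src (Ps.1 ++ w.take (D+1-t)), toVertex e.src (w.drop (k+1-t) ++ Ps.2)) ∈
      {xy : Kautz.Vertex 2 D × Kautz.Vertex 2 D |
        Kautz.dist xy.1 xy.2 = k ∧
        ∃ p : List (Kautz.Vertex 2 D), Kautz.IsWalk p xy.1 xy.2 ∧ p.length = k + 1 ∧
          p[t-1]? = some e.src ∧ p[t]? = some e.tgt} := by
    intro Ps hPs
    rw [hGddef, Finset.mem_filter] at hPs
    obtain ⟨hPairsmem, hno⟩ := hPs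
    have hPairsmem' := hPairsmem
    rw [hPairs, Finset.mem_product] at hPairsmem'
    obtain ⟨hP, hs⟩ := hPairsmem'
    obtain ⟨hPlen, -, -⟩ := hPfact _ hP
    obtain ⟨hslen, -, -⟩ := hsfact _ hs
    obtain ⟨hxlen, hylen⟩ := hxylen _ hP _ hs
    obtain ⟨hxch, hych⟩ := hxych _ hP _ hs
    set xv := toVertex e.src (Ps.1 ++ w.take (D+1-t)) with hxv
    set yv := toVertex e.src (w.drop (k+1-t) ++ Ps.2) with hyv
    have hxw : xv.word = Ps.1 ++ w.take (D+1-t) := toVertex_word _ hxlen hxch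
    have hyw : yv.word = w.drop (k+1-t) ++ Ps.2 := toVertex_word _ hylen hych
    have hzlen : (w.drop (D+1-t) ++ Ps.2).length = k := by
      rw [List.length_append, List.length_drop, hwl, hslen]; omega
    have hXdecomp : xv.word ++ (w.drop (D+1-t) ++ Ps.2) = Ps.1 ++ (w ++ Ps.2) := by
      rw [hxw, List.append_assoc]
      congr 1
      rw [← List.append_assoc, List.take_append_drop]
    have hch : (xv.word ++ (w.drop (D+1-t) ++ Ps.2)).Chain' (· ≠ ·) := by
      rw [hXdecomp]; exact hXchain _ hP _ hs
    have hyX : yv.word = (xv.word ++ (w.drop (D+1-t) ++ Ps.2)).drop k := by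
      rw [hXdecomp, hyw, List.drop_append,
        List.drop_eq_nil_of_le (le_of_eq_of_le hPlen (by omega)),
        List.nil_append, hPlen, List.drop_append,
        (show k - (t-1) - w.length = 0 by rw [hwl]; omega), List.drop_zero,
        (show k - (t-1) = k+1-t by omega)]
    have hnoov : ∀ m, D - k + 1 ≤ m → m ≤ D → xv.word.drop (D - m) ≠ yv.word.take m := by
      intro m hm1 hm2
      rw [hxw, hyw]
      exact hno m hm1 hm2
    obtain ⟨hdist, p, hwalk, hplen, hpidx⟩ :=
      dist_eq_of xv yv k hkD _ hzlen hch hyX hnoov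
    have hsrc_eq : routeV xv _ hch (t-1) = e.src := by
      apply Vertex.ext'
      rw [routeV_word _ _ _ (by rw [hzlen]; omega)]
      rw [hXdecomp, List.drop_append,
        List.drop_eq_nil_of_le (le_of_eq_of_le hPlen (by omega)), List.nil_append, hPlen,
        Nat.sub_self, List.drop_zero,
        List.take_append_of_le_length (by rw [hwl]; omega), hsrcw,
        List.dropLast_eq_take, hwl, (show D + 1 - 1 = D by omega)]
    have htgt_eq : routeV xv _ hch t = e.tgt := by
      apply Vertex.ext'
      rw [routeV_word _ _ _ (by rw [hzlen]; omega)]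
      rw [hXdecomp, List.drop_append,
        List.drop_eq_nil_of_le (le_of_eq_of_le hPlen (by omega)), List.nil_append, hPlen,
        (show t - (t-1) = 1 by omega), List.drop_append,
        (show 1 - w.length = 0 by rw [hwl]; omega), List.drop_zero,
        List.take_append_of_le_length (by rw [List.length_drop, hwl]; omega),
        List.take_of_length_le (by rw [List.length_drop, hwl]; omega), List.drop_one, htgtw]
    refine ⟨hdist, p, hwalk, hplen, ?_, ?_⟩
    · rw [hpidx (t-1) (by omega), hsrc_eq]
    · rw [hpidx t htk, htgt_eq]
  -- N bounds the number of good pairs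
  have hNcard : (Gd.card : ℝ) ≤ (Kautz.N e k t : ℝ) := by
    have hinj : Set.InjOn (fun Ps : List A3 × List A3 =>
        (toVertex e.src (Ps.1 ++ w.take (D+1-t)), toVertex e.src (w.drop (k+1-t) ++ Ps.2)))
        ↑Gd := by
      intro Ps1 h1 Ps2 h2 heq
      have h1' : Ps1 ∈ Pairs := Finset.mem_of_mem_filter _ (by rw [← hGddef] at *; exact h1)
      have h2' : Ps2 ∈ Pairs := Finset.mem_of_mem_filter _ (by rw [← hGddef] at *; exact h2)
      rw [hPairs, Finset.mem_product] at h1' h2'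
      obtain ⟨hP1, hs1⟩ := h1'
      obtain ⟨hP2, hs2⟩ := h2'
      obtain ⟨hxlen1, hylen1⟩ := hxylen _ hP1 _ hs1
      obtain ⟨hxch1, hych1⟩ := hxych _ hP1 _ hs1
      obtain ⟨hxlen2, hylen2⟩ := hxylen _ hP2 _ hs2
      obtain ⟨hxch2, hych2⟩ := hxych _ hP2 _ hs2
      have heq1 := congrArg (fun z => (Prod.fst z).word) heq
      have heq2 := congrArg (fun z => (Prod.snd z).word) heq
      simp only [toVertex_word _ hxlen1 hxch1, toVertex_word _ hylen1 hych1,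
        toVertex_word _ hxlen2 hxch2, toVertex_word _ hylen2 hych2] at heq1 heq2
      have hPeq := (List.append_inj heq1
        (by rw [(hPfact _ hP1).1, (hPfact _ hP2).1])).1
      have hseq := (List.append_inj heq2 rfl).2
      exact Prod.ext hPeq hseq
    calc (Gd.card : ℝ) = ((Gd.image (fun Ps : List A3 × List A3 =>
          (toVertex e.src (Ps.1 ++ w.take (D+1-t)), toVertex e.src (w.drop (k+1-t) ++ Ps.2)))).card : ℝ) := by
          rw [Finset.card_image_of_injOn hinj]
      _ ≤ (Kautz.N e k t : ℝ) := by
          apply Nat.cast_le.mpr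
          rw [Kautz.N, ← Set.ncard_coe_finset]
          apply Set.ncard_le_ncard _ (Set.toFinite _)
          intro xy hxy
          rw [Finset.mem_coe, Finset.mem_image] at hxy
          obtain ⟨Ps, hPs, rfl⟩ := hxy
          exact hGdmem Ps hPs
  -- cardinality of all pairs
  have hPairscard : (Pairs.card : ℝ) = 2^(k-1) := by
    rw [hPairs, Finset.card_product, hPF, hsS,
      Finset.card_image_of_injective _ List.reverse_injective, card_S, card_S]
    push_cast
    rw [← pow_add]
    congr 1
    omega
  -- splitting off the bad pairs
  have hbad : (Pairs.card : ℝ) ≤ (Gd.card : ℝ) +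
      ∑ m ∈ Finset.Icc (D-k+1) D, ((Pairs.filter (fun Ps => Ov Ps m)).card : ℝ) := by
    have h1 : Gd.card + (Pairs.filter (fun Ps => ¬ ∀ m, D-k+1 ≤ m → m ≤ D → ¬ Ov Ps m)).card
        = Pairs.card := by
      rw [hGddef]
      exact Finset.card_filter_add_card_filter_not _
    have h2 : (Pairs.filter (fun Ps => ¬ ∀ m, D-k+1 ≤ m → m ≤ D → ¬ Ov Ps m)).card
        ≤ ∑ m ∈ Finset.Icc (D-k+1) D, (Pairs.filter (fun Ps => Ov Ps m)).card := by
      calc (Pairs.filter (fun Ps => ¬ ∀ m, D-k+1 ≤ m → m ≤ D → ¬ Ov Ps m)).card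
          ≤ ((Finset.Icc (D-k+1) D).biUnion
              (fun m => Pairs.filter (fun Ps => Ov Ps m))).card := by
            apply Finset.card_le_card
            intro Ps hPs
            rw [Finset.mem_filter] at hPs
            obtain ⟨hPsP, hPsn⟩ := hPs
            push_neg at hPsn
            obtain ⟨m, hm1, hm2, hm3⟩ := hPsn
            rw [Finset.mem_biUnion]
            exact ⟨m, Finset.mem_Icc.mpr ⟨hm1, hm2⟩, Finset.mem_filter.mpr ⟨hPsP, hm3⟩⟩
        _ ≤ _ := Finset.card_biUnion_le
    have := add_le_add_right (Nat.cast_le.mpr h2 : ((Pairs.filter _).card:ℝ) ≤ _) (Gd.card : ℝ)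
    rw [show ((Gd.card : ℝ) + (Pairs.filter (fun Ps => ¬ ∀ m, D-k+1 ≤ m → m ≤ D → ¬ Ov Ps m)).card) = ((Gd.card + (Pairs.filter (fun Ps => ¬ ∀ m, D-k+1 ≤ m → m ≤ D → ¬ Ov Ps m)).card : ℕ) : ℝ) by push_cast; ring] at this
    rw [h1] at this
    calc (Pairs.card : ℝ) ≤ (Gd.card : ℝ) + ((∑ m ∈ Finset.Icc (D-k+1) D,
          (Pairs.filter (fun Ps => Ov Ps m)).card : ℕ) : ℝ) := this
      _ = _ := by push_cast; ring
  -- normalized forms of the overlap condition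
  have hLHS_le : ∀ m, m ≤ D+1-t → ∀ P : List A3, P.length = t-1 →
      (P ++ w.take (D+1-t)).drop (D - m) = (w.drop (D+1-t-m)).take m := by
    intro m hm P hPlen
    rw [List.drop_append,
      List.drop_eq_nil_of_le (le_of_eq_of_le hPlen (by omega)), List.nil_append, hPlen,
      (show D - m - (t-1) = D+1-t-m by omega), List.drop_take,
      (show D+1-t - (D+1-t-m) = m by omega)]
  have hLHS_gt : ∀ m, D+1-t < m → m ≤ D → ∀ P : List A3, P.length = t-1 →
      (P ++ w.take (D+1-t)).drop (D - m) = P.drop (D-m) ++ w.take (D+1-t) := by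
    intro m hm1 hm2 P hPlen
    rw [List.drop_append, hPlen,
      (show D - m - (t-1) = 0 by omega), List.drop_zero]
  have hRHS_le : ∀ m, m ≤ D-k+t → ∀ s : List A3,
      (w.drop (k+1-t) ++ s).take m = (w.drop (k+1-t)).take m := by
    intro m hm s
    exact List.take_append_of_le_length (by rw [hL2len]; omega)
  have hRHS_gt : ∀ m, D-k+t < m → ∀ s : List A3,
      (w.drop (k+1-t) ++ s).take m = w.drop (k+1-t) ++ s.take (m - (D-k+t)) := by
    intro m hm s
    rw [List.take_append,
      List.take_of_length_le (by rw [hL2len]; omega), hL2len]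
  -- region 0 : impossible
  have hreg0 : ∀ m, D-k+1 ≤ m → m ≤ D → m ≤ D+1-t → m ≤ D-k+t →
      ∀ Ps, Ps ∈ Pairs → ¬ Ov Ps m := by
    intro m hm1 hm2 hm3 hm4 Ps hPsm hOvm
    have hPlen := (hPfact _ ((Finset.mem_product.mp (by rw [← hPairs] at *; exact hPsm)).1)).1
    simp only [hOvdef] at hOvm
    rw [hLHS_le m hm3 Ps.1 hPlen, hRHS_le m hm4 Ps.2] at hOvm
    have hper : (w.drop (D+1-t-m)).take m = (w.drop ((D+1-t-m) + (m-(D-k)))).take m := by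
      rw [(show (D+1-t-m) + (m-(D-k)) = k+1-t by omega)]
      exact hOvm
    have := key_period h74 (D+1-t-m) (m-(D-k)) m (by omega) (by omega)
      (by rw [hwl]; omega) hper
    omega
  -- region C : impossible (unbordered)
  have hregC : ∀ m, D-k+1 ≤ m → m ≤ D → D+1-t < m → D-k+t < m →
      ∀ Ps, Ps ∈ Pairs → ¬ Ov Ps m := by
    intro m hm1 hm2 hm3 hm4 Ps hPsm hOvm
    have hPlen := (hPfact _ ((Finset.mem_product.mp (by rw [← hPairs] at *; exact hPsm)).1)).1
    simp only [hOvdef] at hOvm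
    rw [hLHS_gt m hm3 hm2 Ps.1 hPlen, hRHS_gt m hm4 Ps.2] at hOvm
    have hdrop := congrArg (List.drop (m - (D+1-t))) hOvm
    rw [List.drop_append,
      List.drop_eq_nil_of_le (by rw [List.length_drop, hPlen]; omega),
      List.nil_append, List.length_drop, hPlen,
      (show m - (D+1-t) - (t - 1 - (D - m)) = 0 by omega), List.drop_zero,
      List.drop_append, List.drop_drop,
      (show m - (D+1-t) - (w.drop (k+1-t)).length = 0 by rw [hL2len]; omega),
      List.drop_zero, (show k+1-t + (m - (D+1-t)) = m-(D-k) by omega)] at hdrop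
    have htake := congrArg (List.take (D+1-(m-(D-k)))) hdrop
    rw [List.take_take, min_eq_left (by omega),
      List.take_append_of_le_length (by rw [List.length_drop, hwl] <;> omega),
      List.take_of_length_le (l := w.drop (m-(D-k))) (by rw [List.length_drop, hwl] <;> omega)]
      at htake
    exact no_period hub hwl (m-(D-k)) (by omega) (by omega) htake
  -- region A : structure of overlaps with m ≤ D+1-t, m > D-k+t
  have hregA : ∀ m, D-k+1 ≤ m → m ≤ D → D-k+t < m → m ≤ D+1-t →
      ∀ Ps, Ps ∈ Pairs → Ov Ps m →
      ((w.drop (D+1-t-m)).take (D-k+t) = w.drop (k+1-t)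
        ∧ Ps.2.take (m-(D-k+t)) = (w.drop ((D+1-t-m)+(D-k+t))).take (m-(D-k+t))) := by
    intro m hm1 hm2 hm3 hm4 Ps hPsm hOvm
    have hPlen := (hPfact _ ((Finset.mem_product.mp (by rw [← hPairs] at *; exact hPsm)).1)).1
    simp only [hOvdef] at hOvm
    rw [hLHS_le m hm4 Ps.1 hPlen, hRHS_gt m hm3 Ps.2] at hOvm
    have hsplit := List.take_add (l := w.drop (D+1-t-m)) (i := D-k+t) (j := m-(D-k+t))
    rw [(show (D-k+t) + (m-(D-k+t)) = m by omega)] at hsplit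
    rw [hsplit, List.drop_drop] at hOvm
    have hlen1 : ((w.drop (D+1-t-m)).take (D-k+t)).length = (w.drop (k+1-t)).length := by
      rw [hL2len, List.length_take, List.length_drop, hwl]
      omega
    obtain ⟨h1, h2⟩ := List.append_inj hOvm hlen1
    exact ⟨h1, h2.symm⟩
  -- region B : structure of overlaps with m > D+1-t, m ≤ D-k+t
  have hregB : ∀ m, D-k+1 ≤ m → m ≤ D → D+1-t < m → m ≤ D-k+t →
      ∀ Ps, Ps ∈ Pairs → Ov Ps m →
      (Ps.1.drop (D-m) = (w.drop (k+1-t)).take (m-(D+1-t))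
        ∧ w.take (D+1-t) = (w.drop (m-(D-k))).take (D+1-t)) := by
    intro m hm1 hm2 hm3 hm4 Ps hPsm hOvm
    have hPlen := (hPfact _ ((Finset.mem_product.mp (by rw [← hPairs] at *; exact hPsm)).1)).1
    simp only [hOvdef] at hOvm
    rw [hLHS_gt m hm3 hm2 Ps.1 hPlen, hRHS_le m hm4 Ps.2] at hOvm
    have hsplit := List.take_add (l := w.drop (k+1-t)) (i := m-(D+1-t)) (j := D+1-t)
    rw [(show (m-(D+1-t)) + (D+1-t) = m by omega)] at hsplit
    rw [hsplit, List.drop_drop,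
      (show k+1-t + (m-(D+1-t)) = m-(D-k) by omega)] at hOvm
    have hlen1 : (Ps.1.drop (D-m)).length = ((w.drop (k+1-t)).take (m-(D+1-t))).length := by
      rw [List.length_drop, hPlen, List.length_take, hL2len]
      omega
    obtain ⟨h1, h2⟩ := List.append_inj hOvm hlen1
    exact ⟨h1, h2⟩
  -- the two finsets of active overlap lengths
  set MA : Finset ℕ := (Finset.Icc (D-k+1) D).filter
    (fun m => D-k+t < m ∧ m ≤ D+1-t ∧ (Pairs.filter (fun Ps => Ov Ps m)).Nonempty) with hMA
  set MB : Finset ℕ := (Finset.Icc (D-k+1) D).filter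
    (fun m => D+1-t < m ∧ m ≤ D-k+t ∧ (Pairs.filter (fun Ps => Ov Ps m)).Nonempty) with hMB
  have hMAfacts : ∀ m ∈ MA, (w.drop (D+1-t-m)).take (D-k+t) = w.drop (k+1-t)
      ∧ D-k+1 ≤ m ∧ m ≤ D ∧ D-k+t < m ∧ m ≤ D+1-t := by
    intro m hm
    rw [hMA, Finset.mem_filter, Finset.mem_Icc] at hm
    obtain ⟨⟨hm1, hm2⟩, hm3, hm4, Ps, hPs⟩ := hm
    rw [Finset.mem_filter] at hPs
    exact ⟨(hregA m hm1 hm2 hm3 hm4 Ps hPs.1 hPs.2).1, hm1, hm2, hm3, hm4⟩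
  have hMBfacts : ∀ m ∈ MB, w.take (D+1-t) = (w.drop (m-(D-k))).take (D+1-t)
      ∧ D-k+1 ≤ m ∧ m ≤ D ∧ D+1-t < m ∧ m ≤ D-k+t := by
    intro m hm
    rw [hMB, Finset.mem_filter, Finset.mem_Icc] at hm
    obtain ⟨⟨hm1, hm2⟩, hm3, hm4, Ps, hPs⟩ := hm
    rw [Finset.mem_filter] at hPs
    exact ⟨(hregB m hm1 hm2 hm3 hm4 Ps hPs.1 hPs.2).2, hm1, hm2, hm3, hm4⟩
  have hMAmin : ∀ m ∈ MA, (D-k) + (4*(D-k+t)+2)/3 ≤ m := by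
    intro m hm
    obtain ⟨hCA, hm1, hm2, hm3, hm4⟩ := hMAfacts m hm
    have hper : (w.drop (D+1-t-m)).take (D-k+t)
        = (w.drop ((D+1-t-m) + (m-(D-k)))).take (D-k+t) := by
      rw [(show (D+1-t-m) + (m-(D-k)) = k+1-t by omega),
        List.take_of_length_le (le_of_eq hL2len)]
      exact hCA
    have := key_period h74 (D+1-t-m) (m-(D-k)) (D-k+t) (by omega) (by omega)
      (by rw [hwl]; omega) hper
    omega
  have hMAgap : ∀ m ∈ MA, m + 1 ∉ MA := by
    intro m hm hm'
    obtain ⟨hCA, hm1, hm2, hm3, hm4⟩ := hMAfacts m hm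
    obtain ⟨hCA', hm1', hm2', hm3', hm4'⟩ := hMAfacts (m+1) hm'
    have hper : (w.drop (D+1-t-(m+1))).take (D-k+t)
        = (w.drop ((D+1-t-(m+1)) + 1)).take (D-k+t) := by
      rw [(show (D+1-t-(m+1)) + 1 = D+1-t-m by omega)]
      rw [hCA', hCA]
    have := key_period h74 (D+1-t-(m+1)) 1 (D-k+t) (le_refl 1) (by omega)
      (by rw [hwl]; omega) hper
    omega
  have hMBmin : ∀ m ∈ MB, (D-k) + (4*(D+1-t)+2)/3 ≤ m := by
    intro m hm
    obtain ⟨hCB, hm1, hm2, hm3, hm4⟩ := hMBfacts m hm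
    have hper : (w.drop 0).take (D+1-t) = (w.drop (0 + (m-(D-k)))).take (D+1-t) := by
      rw [List.drop_zero, Nat.zero_add]
      exact hCB
    have := key_period h74 0 (m-(D-k)) (D+1-t) (by omega) (by omega)
      (by rw [hwl]; omega) hper
    omega
  have hMBgap : ∀ m ∈ MB, m + 1 ∉ MB := by
    intro m hm hm'
    obtain ⟨hCB, hm1, hm2, hm3, hm4⟩ := hMBfacts m hm
    obtain ⟨hCB', hm1', hm2', hm3', hm4'⟩ := hMBfacts (m+1) hm'
    have hper : (w.drop (m-(D-k))).take (D+1-t)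
        = (w.drop ((m-(D-k)) + 1)).take (D+1-t) := by
      rw [(show (m-(D-k)) + 1 = (m+1)-(D-k) by omega)]
      rw [← hCB, ← hCB']
    have := key_period h74 (m-(D-k)) 1 (D+1-t) (le_refl 1) (by omega)
      (by rw [hwl]; omega) hper
    omega
  -- cardinality bounds on the bad fibers
  have hMAcard : ∀ m ∈ MA, ((Pairs.filter (fun Ps => Ov Ps m)).card : ℝ)
      ≤ 2^(k-1+(D-k+t)) * (2⁻¹)^m := by
    intro m hm
    obtain ⟨-, hm1, hm2, hm3, hm4⟩ := hMAfacts m hm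
    have hsub : Pairs.filter (fun Ps => Ov Ps m) ⊆
        PF ×ˢ (sS.filter (fun s => s.take (m-(D-k+t))
          = (w.drop ((D+1-t-m)+(D-k+t))).take (m-(D-k+t)))) := by
      intro Ps hPs
      rw [Finset.mem_filter] at hPs
      have hmemP := (Finset.mem_product.mp (by rw [← hPairs] at *; exact hPs.1))
      rw [Finset.mem_product]
      refine ⟨hmemP.1, Finset.mem_filter.mpr ⟨hmemP.2, ?_⟩⟩
      have := (hregA m hm1 hm2 hm3 hm4 Ps hPs.1 hPs.2).2
      exact this
    have hnat : (Pairs.filter (fun Ps => Ov Ps m)).card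
        ≤ 2^(t-1) * 2^((k-t)-(m-(D-k+t))) := by
      calc (Pairs.filter (fun Ps => Ov Ps m)).card
          ≤ (PF ×ˢ (sS.filter (fun s => s.take (m-(D-k+t))
            = (w.drop ((D+1-t-m)+(D-k+t))).take (m-(D-k+t))))).card :=
            Finset.card_le_card hsub
        _ = PF.card * (sS.filter (fun s => s.take (m-(D-k+t))
            = (w.drop ((D+1-t-m)+(D-k+t))).take (m-(D-k+t)))).card := Finset.card_product _ _
        _ ≤ 2^(t-1) * 2^((k-t)-(m-(D-k+t))) := by
            apply Nat.mul_le_mul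
            · rw [hPF, Finset.card_image_of_injective _ List.reverse_injective, card_S]
            · rw [hsS]
              exact card_S_filter_prefix (k-t) (m-(D-k+t)) wL _ (by omega) (by omega)
    calc ((Pairs.filter (fun Ps => Ov Ps m)).card : ℝ)
        ≤ ((2^(t-1) * 2^((k-t)-(m-(D-k+t))) : ℕ) : ℝ) := Nat.cast_le.mpr hnat
      _ = 2^((t-1) + ((k-t)-(m-(D-k+t)))) * (2⁻¹)^0 := by push_cast; rw [← pow_add]; ring
      _ ≤ 2^(k-1+(D-k+t)) * (2⁻¹)^m := pow2_le_pow2 _ _ _ _ (by omega)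
  have hMBcard : ∀ m ∈ MB, ((Pairs.filter (fun Ps => Ov Ps m)).card : ℝ)
      ≤ 2^(k-1+(D+1-t)) * (2⁻¹)^m := by
    intro m hm
    obtain ⟨-, hm1, hm2, hm3, hm4⟩ := hMBfacts m hm
    have hcard2 : (Pairs.filter (fun Ps => Ov Ps m)).card ≤
        (((S (t-1) w0).filter (fun r => r.take (m-(D+1-t))
          = ((w.drop (k+1-t)).take (m-(D+1-t))).reverse)) ×ˢ sS).card := by
      apply Finset.card_le_card_of_injOn (fun Ps => (Ps.1.reverse, Ps.2))
      · intro Ps hPs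
        rw [Finset.mem_coe, Finset.mem_filter] at hPs
        have hmemP := (Finset.mem_product.mp (by rw [← hPairs] at *; exact hPs.1))
        have hPlen := (hPfact _ hmemP.1).1
        simp only [Finset.mem_coe]
        rw [Finset.mem_product]
        constructor
        · rw [Finset.mem_filter]
          constructor
          · have hmem1 := hmemP.1
            rw [hPF, Finset.mem_image] at hmem1
            obtain ⟨P0, hP0, heqP⟩ := hmem1
            rw [← heqP]
            simpa using hP0
          · have hdropeq := (hregB m hm1 hm2 hm3 hm4 Ps hPs.1 hPs.2).1
            have := congrArg List.reverse hdropeq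
            rw [List.reverse_drop] at this
            rw [hPlen, (show t - 1 - (D - m) = m - (D+1-t) by omega)] at this
            exact this
        · exact hmemP.2
      · intro Ps1 h1 Ps2 h2 heq
        simp only [Prod.mk.injEq] at heq
        exact Prod.ext (List.reverse_injective heq.1) heq.2
    have hnat : (Pairs.filter (fun Ps => Ov Ps m)).card
        ≤ 2^((t-1)-(m-(D+1-t))) * 2^(k-t) := by
      calc (Pairs.filter (fun Ps => Ov Ps m)).card
          ≤ _ := hcard2
        _ = ((S (t-1) w0).filter (fun r => r.take (m-(D+1-t))
            = ((w.drop (k+1-t)).take (m-(D+1-t))).reverse)).card * sS.card :=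
            Finset.card_product _ _
        _ ≤ 2^((t-1)-(m-(D+1-t))) * 2^(k-t) := by
            apply Nat.mul_le_mul
            · exact card_S_filter_prefix (t-1) (m-(D+1-t)) w0 _ (by omega) (by omega)
            · rw [hsS, card_S]
    calc ((Pairs.filter (fun Ps => Ov Ps m)).card : ℝ)
        ≤ ((2^((t-1)-(m-(D+1-t))) * 2^(k-t) : ℕ) : ℝ) := Nat.cast_le.mpr hnat
      _ = 2^(((t-1)-(m-(D+1-t))) + (k-t)) * (2⁻¹)^0 := by push_cast; rw [← pow_add]; ring
      _ ≤ 2^(k-1+(D+1-t)) * (2⁻¹)^m := pow2_le_pow2 _ _ _ _ (by omega)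
  -- sum over the bad fibers
  have hMAsum : ∑ m ∈ MA, ((Pairs.filter (fun Ps => Ov Ps m)).card : ℝ)
      ≤ (4/3) * 2^(k-1) * (2⁻¹)^((D-k) + (t+2)/3) := by
    calc ∑ m ∈ MA, ((Pairs.filter (fun Ps => Ov Ps m)).card : ℝ)
        ≤ ∑ m ∈ MA, 2^(k-1+(D-k+t)) * (2⁻¹)^m := Finset.sum_le_sum hMAcard
      _ = 2^(k-1+(D-k+t)) * ∑ m ∈ MA, ((2:ℝ)⁻¹)^m := by rw [Finset.mul_sum]
      _ ≤ 2^(k-1+(D-k+t)) * ((4/3) * (2⁻¹)^((D-k) + (4*(D-k+t)+2)/3)) := by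
          apply mul_le_mul_of_nonneg_left
            (geo_sum MA.card MA rfl _ hMAmin hMAgap) (by positivity)
      _ = (4/3) * (2^(k-1+(D-k+t)) * (2⁻¹)^((D-k) + (4*(D-k+t)+2)/3)) := by ring
      _ ≤ (4/3) * (2^(k-1) * (2⁻¹)^((D-k) + (t+2)/3)) := by
          apply mul_le_mul_of_nonneg_left (pow2_le_pow2 _ _ _ _ ?_) (by norm_num)
          have hdiv1 : (4*(D-k+t)+2)/3 = (D-k+t) + ((D-k+t)+2)/3 := by omega
          have hdiv2 : (t+2)/3 ≤ ((D-k+t)+2)/3 := Nat.div_le_div_right (by omega)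
          omega
      _ = (4/3) * 2^(k-1) * (2⁻¹)^((D-k) + (t+2)/3) := by ring
  have hMBsum : ∑ m ∈ MB, ((Pairs.filter (fun Ps => Ov Ps m)).card : ℝ)
      ≤ (4/3) * 2^(k-1) * (2⁻¹)^((D-k) + (k+1-t+2)/3) := by
    calc ∑ m ∈ MB, ((Pairs.filter (fun Ps => Ov Ps m)).card : ℝ)
        ≤ ∑ m ∈ MB, 2^(k-1+(D+1-t)) * (2⁻¹)^m := Finset.sum_le_sum hMBcard
      _ = 2^(k-1+(D+1-t)) * ∑ m ∈ MB, ((2:ℝ)⁻¹)^m := by rw [Finset.mul_sum]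
      _ ≤ 2^(k-1+(D+1-t)) * ((4/3) * (2⁻¹)^((D-k) + (4*(D+1-t)+2)/3)) := by
          apply mul_le_mul_of_nonneg_left
            (geo_sum MB.card MB rfl _ hMBmin hMBgap) (by positivity)
      _ = (4/3) * (2^(k-1+(D+1-t)) * (2⁻¹)^((D-k) + (4*(D+1-t)+2)/3)) := by ring
      _ ≤ (4/3) * (2^(k-1) * (2⁻¹)^((D-k) + (k+1-t+2)/3)) := by
          apply mul_le_mul_of_nonneg_left (pow2_le_pow2 _ _ _ _ ?_) (by norm_num)
          have hdiv1 : (4*(D+1-t)+2)/3 = (D+1-t) + ((D+1-t)+2)/3 := by omega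
          have hdiv2 : (k+1-t+2)/3 ≤ ((D+1-t)+2)/3 := Nat.div_le_div_right (by omega)
          omega
      _ = (4/3) * 2^(k-1) * (2⁻¹)^((D-k) + (k+1-t+2)/3) := by ring
  -- all nonzero fibers live in MA ∪ MB
  have hsumsplit : ∑ m ∈ Finset.Icc (D-k+1) D, ((Pairs.filter (fun Ps => Ov Ps m)).card : ℝ)
      = ∑ m ∈ MA, ((Pairs.filter (fun Ps => Ov Ps m)).card : ℝ)
        + ∑ m ∈ MB, ((Pairs.filter (fun Ps => Ov Ps m)).card : ℝ) := by
    have hdisj : Disjoint MA MB := by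
      rw [Finset.disjoint_left]
      intro m hmA hmB
      rw [hMA, Finset.mem_filter] at hmA
      rw [hMB, Finset.mem_filter] at hmB
      omega
    rw [← Finset.sum_union hdisj]
    apply (Finset.sum_subset ?_ ?_).symm
    · intro m hm
      rw [Finset.mem_union] at hm
      rcases hm with hm | hm
      · rw [hMA, Finset.mem_filter] at hm; exact hm.1
      · rw [hMB, Finset.mem_filter] at hm; exact hm.1
    · intro m hmIcc hmnot
      rw [Finset.mem_Icc] at hmIcc
      rw [Finset.mem_union] at hmnot
      push_neg at hmnot
      have hempty : (Pairs.filter (fun Ps => Ov Ps m)) = ∅ := by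
        rw [Finset.filter_eq_empty_iff]
        intro Ps hPsm
        by_cases h1 : m ≤ D+1-t
        · by_cases h2 : m ≤ D-k+t
          · exact hreg0 m hmIcc.1 hmIcc.2 h1 h2 Ps hPsm
          · intro hOvm
            apply hmnot.1
            rw [hMA, Finset.mem_filter, Finset.mem_Icc]
            exact ⟨hmIcc, by omega, h1, ⟨Ps, Finset.mem_filter.mpr ⟨hPsm, hOvm⟩⟩⟩
        · by_cases h2 : m ≤ D-k+t
          · intro hOvm
            apply hmnot.2
            rw [hMB, Finset.mem_filter, Finset.mem_Icc]
            exact ⟨hmIcc, by omega, h2, ⟨Ps, Finset.mem_filter.mpr ⟨hPsm, hOvm⟩⟩⟩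
          · exact hregC m hmIcc.1 hmIcc.2 (by omega) (by omega) Ps hPsm
      rw [hempty]
      simp
  -- final assembly
  calc (2:ℝ)^(k-1) = (Pairs.card : ℝ) := hPairscard.symm
    _ ≤ (Gd.card : ℝ) + ∑ m ∈ Finset.Icc (D-k+1) D,
        ((Pairs.filter (fun Ps => Ov Ps m)).card : ℝ) := hbad
    _ ≤ (Kautz.N e k t : ℝ) + ((4/3) * 2^(k-1) * (2⁻¹)^((D-k) + (t+2)/3)
        + (4/3) * 2^(k-1) * (2⁻¹)^((D-k) + (k+1-t+2)/3)) := by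
        apply add_le_add hNcard
        rw [hsumsplit]
        exact add_le_add hMAsum hMBsum
    _ = (Kautz.N e k t : ℝ) + (4/3) * 2^(k-1) *
        ((2⁻¹)^((D-k) + (t+2)/3) + (2⁻¹)^((D-k) + (k+1-t+2)/3)) := by ring
end Aux4
section Final
open Kautz List

theorem U_lower (D : ℕ) (e : Kautz.Edge 2 D) (hD : 1 ≤ D)
    (hub : Kautz.Unbordered e.word) (h74 : Kautz.SevenFourthsPlusFree e.word)
    (k : ℕ) (hk1 : 1 ≤ k) (hkD : k ≤ D) :
    (k : ℝ) * 2^(k-1) - 8 * 2^(k-1) * (2⁻¹)^(D-k) ≤ (Kautz.U e k : ℝ) := by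
  have hsum : (Kautz.U e k : ℝ) = ∑ t ∈ Finset.Icc 1 k, (Kautz.N e k t : ℝ) := by
    rw [Kautz.U]; push_cast; ring
  have hterm : ∀ t ∈ Finset.Icc 1 k, (2:ℝ)^(k-1)
      - (4/3) * 2^(k-1) * ((2⁻¹)^((D-k) + (t+2)/3) + (2⁻¹)^((D-k) + (k+1-t+2)/3))
      ≤ (Kautz.N e k t : ℝ) := by
    intro t ht
    rw [Finset.mem_Icc] at ht
    have := N_lower D e hD hub h74 k t ht.1 ht.2 hkD
    linarith
  have hge := Finset.sum_le_sum hterm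
  rw [← hsum] at hge
  have hsum1 : ∑ t ∈ Finset.Icc 1 k, ((2:ℝ)⁻¹)^((D-k) + (t+2)/3)
      ≤ 3 * (2⁻¹)^(D-k) := by
    calc ∑ t ∈ Finset.Icc 1 k, ((2:ℝ)⁻¹)^((D-k) + (t+2)/3)
        = (2⁻¹)^(D-k) * ∑ t ∈ Finset.Icc 1 k, ((2:ℝ)⁻¹)^((t+2)/3) := by
          rw [Finset.mul_sum]
          exact Finset.sum_congr rfl (fun t ht => by rw [pow_add])
      _ ≤ (2⁻¹)^(D-k) * 3 :=
          mul_le_mul_of_nonneg_left (sum_ceil3 k) (by positivity)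
      _ = 3 * (2⁻¹)^(D-k) := by ring
  have hsum2 : ∑ t ∈ Finset.Icc 1 k, ((2:ℝ)⁻¹)^((D-k) + (k+1-t+2)/3)
      ≤ 3 * (2⁻¹)^(D-k) := by
    have hre : ∑ t ∈ Finset.Icc 1 k, ((2:ℝ)⁻¹)^((D-k) + (k+1-t+2)/3)
        = ∑ t ∈ Finset.Icc 1 k, ((2:ℝ)⁻¹)^((D-k) + (t+2)/3) := by
      apply Finset.sum_nbij' (fun t => k+1-t) (fun t => k+1-t)
      · intro a ha; rw [Finset.mem_Icc] at *; omega
      · intro a ha; rw [Finset.mem_Icc] at *; omega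
      · intro a ha; rw [Finset.mem_Icc] at ha; omega
      · intro a ha; rw [Finset.mem_Icc] at ha; omega
      · intro a ha; rfl
    rw [hre]; exact hsum1
  have hconst : ∑ t ∈ Finset.Icc 1 k, (2:ℝ)^(k-1) = k * 2^(k-1) := by
    rw [Finset.sum_const, Nat.card_Icc, Nat.add_sub_cancel, nsmul_eq_mul]
  have hsplit : ∑ t ∈ Finset.Icc 1 k, ((2:ℝ)^(k-1)
      - (4/3) * 2^(k-1) * ((2⁻¹)^((D-k) + (t+2)/3) + (2⁻¹)^((D-k) + (k+1-t+2)/3)))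
      = k * 2^(k-1) - (4/3) * 2^(k-1) *
        ((∑ t ∈ Finset.Icc 1 k, ((2:ℝ)⁻¹)^((D-k) + (t+2)/3))
          + (∑ t ∈ Finset.Icc 1 k, ((2:ℝ)⁻¹)^((D-k) + (k+1-t+2)/3))) := by
    rw [Finset.sum_sub_distrib, hconst]
    congr 1
    rw [← Finset.sum_add_distrib, Finset.mul_sum]
  rw [hsplit] at hge
  have hfinal : (4/3) * (2:ℝ)^(k-1) *
      ((∑ t ∈ Finset.Icc 1 k, ((2:ℝ)⁻¹)^((D-k) + (t+2)/3))
        + (∑ t ∈ Finset.Icc 1 k, ((2:ℝ)⁻¹)^((D-k) + (k+1-t+2)/3)))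
      ≤ 8 * 2^(k-1) * (2⁻¹)^(D-k) := by
    have h6 : (∑ t ∈ Finset.Icc 1 k, ((2:ℝ)⁻¹)^((D-k) + (t+2)/3))
        + (∑ t ∈ Finset.Icc 1 k, ((2:ℝ)⁻¹)^((D-k) + (k+1-t+2)/3))
        ≤ 6 * (2⁻¹)^(D-k) := by linarith
    calc (4/3) * (2:ℝ)^(k-1) * _ ≤ (4/3) * (2:ℝ)^(k-1) * (6 * (2⁻¹)^(D-k)) :=
          mul_le_mul_of_nonneg_left h6 (by positivity)
      _ = 8 * 2^(k-1) * (2⁻¹)^(D-k) := by ring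
  linarith

theorem statement3' (D : ℕ) (hD : 35 ≤ D) (e : Kautz.Edge 2 D)
    (hub : Kautz.Unbordered e.word)
    (h74 : Kautz.SevenFourthsPlusFree e.word) :
    Kautz.tau 2 D < Kautz.cong e := by
  have hD1 : 1 ≤ D := by omega
  have hcongsum : (Kautz.cong e : ℝ) = ∑ k ∈ Finset.Icc 1 D, (Kautz.U e k : ℝ) := by
    rw [Kautz.cong]; push_cast; ring
  have hterm := fun k hk1 hkD => U_lower D e hD1 hub h74 k hk1 hkD
  have hge : ∑ k ∈ Finset.Icc 1 D, ((k : ℝ) * 2^(k-1) - 8 * 2^(k-1) * (2⁻¹)^(D-k))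
      ≤ (Kautz.cong e : ℝ) := by
    rw [hcongsum]
    apply Finset.sum_le_sum
    intro k hk
    rw [Finset.mem_Icc] at hk
    exact hterm k hk.1 hk.2
  have herr : ∑ k ∈ Finset.Icc 1 D, (2:ℝ)^(k-1) * (2⁻¹)^(D-k) ≤ (2/3) * 2^D := by
    have ht : ∀ k ∈ Finset.Icc 1 D, (2:ℝ)^(k-1) * (2⁻¹)^(D-k)
        ≤ 4^k * (2⁻¹)^(D+1) := by
      intro k hk
      rw [Finset.mem_Icc] at hk
      calc (2:ℝ)^(k-1) * (2⁻¹)^(D-k) ≤ 2^(2*k) * (2⁻¹)^(D+1) :=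
            pow2_le_pow2 _ _ _ _ (by omega)
        _ = 4^k * (2⁻¹)^(D+1) := by rw [pow_mul]; norm_num
    calc ∑ k ∈ Finset.Icc 1 D, (2:ℝ)^(k-1) * (2⁻¹)^(D-k)
        ≤ ∑ k ∈ Finset.Icc 1 D, (4:ℝ)^k * (2⁻¹)^(D+1) := Finset.sum_le_sum ht
      _ = (∑ k ∈ Finset.Icc 1 D, (4:ℝ)^k) * (2⁻¹)^(D+1) := by
          rw [Finset.sum_mul]
      _ ≤ (4^(D+1)/3) * (2⁻¹)^(D+1) := by
          apply mul_le_mul_of_nonneg_right _ (by positivity)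
          have hsub : ∑ k ∈ Finset.Icc 1 D, (4:ℝ)^k
              ≤ ∑ k ∈ Finset.range (D+1), (4:ℝ)^k := by
            apply Finset.sum_le_sum_of_subset_of_nonneg
            · intro a ha
              rw [Finset.mem_Icc] at ha
              rw [Finset.mem_range]
              omega
            · intros; positivity
          have hgeom : ∑ k ∈ Finset.range (D+1), (4:ℝ)^k = (4^(D+1) - 1)/3 := by
            rw [geom_sum_eq (by norm_num)]
            norm_num
          rw [hgeom] at hsub
          have h4 : (0:ℝ) ≤ 4^(D+1) := by positivity
          linarith
      _ = (2/3) * 2^D := by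
          have h42 : (4:ℝ)^(D+1) * (2⁻¹)^(D+1) = 2^(D+1) := by
            rw [← mul_pow]; norm_num
          rw [div_mul_eq_mul_div, h42, pow_succ]
          ring
  have hkpow := sum_k_pow D
  have hcong : ((D:ℝ) - 1) * 2^D + 1 - (16/3) * 2^D ≤ (Kautz.cong e : ℝ) := by
    have h1 : ∑ k ∈ Finset.Icc 1 D, ((k : ℝ) * 2^(k-1) - 8 * 2^(k-1) * (2⁻¹)^(D-k))
        = (∑ k ∈ Finset.Icc 1 D, (k : ℝ) * 2^(k-1))
          - 8 * ∑ k ∈ Finset.Icc 1 D, (2:ℝ)^(k-1) * (2⁻¹)^(D-k) := by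
      rw [Finset.sum_sub_distrib, Finset.mul_sum]
      congr 1
      exact Finset.sum_congr rfl (fun k hk => by ring)
    rw [h1, hkpow] at hge
    linarith
  have htau : (Kautz.tau 2 D : ℝ) = ((D:ℝ)-1) * 2^(D-2) + D * 2^(D-1) := by
    rw [Kautz.tau]
    push_cast [Nat.cast_sub hD1]
    ring
  have hE1 : (2:ℝ)^D = 2^(D-2) * 4 := by
    have h : (2:ℝ)^D = 2^((D-2)+2) := by congr 1; omega
    rw [h, pow_add]
    norm_num
  have hE2 : (2:ℝ)^(D-1) = 2^(D-2) * 2 := by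
    have h : (2:ℝ)^(D-1) = 2^((D-2)+1) := by congr 1; omega
    rw [h, pow_add]
    norm_num
  have hEpos : (1:ℝ) ≤ 2^(D-2) := by
    calc (1:ℝ) = 2^0 := by norm_num
      _ ≤ 2^(D-2) := pow_le_pow_right₀ (by norm_num) (Nat.zero_le _)
  have hD35 : (35:ℝ) ≤ (D:ℝ) := by exact_mod_cast hD
  have hlt : (Kautz.tau 2 D : ℝ) < (Kautz.cong e : ℝ) := by
    rw [htau]
    have hkey : (32/3 : ℝ) * 1 ≤ ((D:ℝ) - 73/3) * 2^(D-2) := by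
      apply mul_le_mul (by linarith) hEpos (by norm_num) (by linarith)
    calc ((D:ℝ)-1) * 2^(D-2) + D * 2^(D-1)
        < ((D:ℝ)-1)*2^D + 1 - (16/3)*2^D := by
          rw [hE1, hE2]
          nlinarith [hkey, hEpos, hD35]
      _ ≤ _ := hcong
  exact Nat.cast_lt.mp hlt
end Final

/-- Let `D ≥ 35` and let `e` be a directed edge of `K(2,D)` whose edge-word is
an unbordered `7/4⁺`-power-free ternary word of length `D+1`.
Then `cong(e) > τ(2,D)`. -/
theorem statement3 (D : ℕ) (hD : 35 ≤ D) (e : Kautz.Edge 2 D)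
    (hlen : e.word.length = D + 1)
    (hub : Kautz.Unbordered e.word)
    (h74 : Kautz.SevenFourthsPlusFree e.word)
    (htern : Kautz.IsTernary e.word) :
    Kautz.tau 2 D < Kautz.cong e := by
  exact statement3' D hD e hub h74
end

section
/- Let d ≥ 2, D ≥ 2, and let e be any directed edge of the Kautz digraph K(d,D). Then U_{D−1}(e) ≥ ((D−1)/(d·D))·U_D(e). -/
open scoped BigOperators Classical

namespace Kautz

variable {d D : ℕ}

theorem Vertex.ext' {u v : Vertex d D} (h : u.word = v.word) : u = v := by
  cases u; cases v; simpa using h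

instance : Finite (Vertex d D) := by
  apply Finite.of_injective
    (fun v : Vertex d D => (fun i : Fin D => v.word.get ⟨i, by rw [v.length_eq]; exact i.isLt⟩))
  intro u v h
  apply Vertex.ext'
  apply List.ext_getElem (by rw [u.length_eq, v.length_eq])
  intro n h1 h2
  have := congrFun h ⟨n, by rwa [u.length_eq] at h1⟩
  simpa using this

def letter (v : Vertex d D) (j : ℕ) : Fin (d+1) := v.word.getD j 0

theorem letter_inj {u v : Vertex d D} (h : ∀ j < D, letter u j = letter v j) : u = v := by
  apply Vertex.ext'
  apply List.ext_getElem (by rw [u.length_eq, v.length_eq])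
  intro n h1 h2
  have := h n (by rwa [u.length_eq] at h1)
  rwa [letter, letter, List.getD_eq_getElem _ _ h1, List.getD_eq_getElem _ _ h2] at this

theorem chain'_rel {α : Type*} {R : α → α → Prop} {l : List α} (h : l.Chain' R) {i : ℕ}
    (hi : i + 1 < l.length) : R (l[i]'(by omega)) (l[i+1]'hi) := by
  have := List.isChain_iff_getElem.1 h i (by omega)
  simpa using this

theorem IsWalk.ne_nil {p : List (Vertex d D)} {x y : Vertex d D} (h : IsWalk p x y) : p ≠ [] := by
  intro hn; rw [hn] at h; simp [IsWalk] at h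

theorem IsWalk.length_pos {p : List (Vertex d D)} {x y : Vertex d D} (h : IsWalk p x y) :
    0 < p.length := List.length_pos_iff.2 h.ne_nil

theorem IsWalk.getElem?_zero {p : List (Vertex d D)} {x y : Vertex d D} (h : IsWalk p x y) :
    p[0]? = some x := by
  rw [← List.head?_eq_getElem?]; exact h.1

theorem IsWalk.getElem?_last {p : List (Vertex d D)} {x y : Vertex d D} (h : IsWalk p x y) :
    p[p.length - 1]? = some y := by
  rw [← List.getLast?_eq_getElem?]; exact h.2.1

theorem dist_le_of_walk {p : List (Vertex d D)} {x y : Vertex d D} {k : ℕ}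
    (h : IsWalk p x y) (hl : p.length = k + 1) : dist x y ≤ k :=
  Nat.sInf_le ⟨p, h, hl⟩

theorem exists_geodesic {p : List (Vertex d D)} {x y : Vertex d D} (h : IsWalk p x y) :
    ∃ q, IsWalk q x y ∧ q.length = dist x y + 1 := by
  have hne : {k | ∃ p : List (Vertex d D), IsWalk p x y ∧ p.length = k + 1}.Nonempty :=
    ⟨p.length - 1, p, h, by have := h.length_pos; omega⟩
  have := Nat.sInf_mem hne
  obtain ⟨q, hq, hql⟩ := this
  exact ⟨q, hq, hql⟩

theorem IsWalk.cons {p : List (Vertex d D)} {x' y : Vertex d D} (h : IsWalk p x' y)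
    (x : Vertex d D) (hadj : Adj x x') : IsWalk (x :: p) x y := by
  refine ⟨rfl, ?_, ?_⟩
  · rw [List.getLast?_cons, List.getLast?_eq_getLast h.ne_nil]
    · simpa [List.getLast?_eq_getLast h.ne_nil] using h.2.1
  · refine List.isChain_cons.2 ⟨?_, h.2.2⟩
    intro z hz
    rw [h.1, Option.mem_some_iff] at hz
    exact hz ▸ hadj

theorem IsWalk.concat {p : List (Vertex d D)} {x y' : Vertex d D} (h : IsWalk p x y')
    (y : Vertex d D) (hadj : Adj y' y) : IsWalk (p ++ [y]) x y := by
  refine ⟨?_, ?_, ?_⟩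
  · rw [List.head?_append, h.1]; rfl
  · simp
  · refine List.isChain_append.2 ⟨h.2.2, List.isChain_singleton y, ?_⟩
    intro a ha b hb
    rw [h.2.1, Option.mem_some_iff] at ha
    simp only [List.head?_cons, Option.mem_some_iff] at hb
    exact ha ▸ hb ▸ hadj

theorem IsWalk.tail' {p : List (Vertex d D)} {x y x' : Vertex d D} (h : IsWalk p x y)
    (hl : 2 ≤ p.length) (hx' : p[1]? = some x') : IsWalk p.tail x' y := by
  refine ⟨?_, ?_, h.2.2.tail⟩
  · rw [List.head?_eq_getElem?, List.getElem?_tail]; exact hx'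
  · rw [List.getLast?_eq_getElem?, List.length_tail, List.getElem?_tail,
      show p.length - 1 - 1 + 1 = p.length - 1 by omega]
    exact h.getElem?_last

theorem IsWalk.dropLast' {p : List (Vertex d D)} {x y y' : Vertex d D} (h : IsWalk p x y)
    (hl : 2 ≤ p.length) (hy' : p[p.length - 2]? = some y') : IsWalk p.dropLast x y' := by
  refine ⟨?_, ?_, h.2.2.prefix (List.dropLast_prefix p)⟩
  · rw [List.head?_eq_getElem?, List.getElem?_dropLast, if_pos (by omega)]
    exact h.getElem?_zero
  · rw [List.getLast?_eq_getElem?, List.length_dropLast, List.getElem?_dropLast,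
      if_pos (by omega), show p.length - 1 - 1 = p.length - 2 by omega]
    exact hy'

theorem adj_letter_spec {u v : Vertex d D} (hD : 1 ≤ D) (h : Adj u v) :
    (∀ j, j + 1 < D → letter v j = letter u (j+1)) ∧
    letter v (D-1) ≠ letter u (D-1) ∧ letter u 0 ≠ letter v 0 := by
  obtain ⟨w, hwl, hwc, hu, hv⟩ := h
  have hud : u.word.length = D := u.length_eq
  have hvd : v.word.length = D := v.length_eq
  have hU : ∀ j (hj : j < D), letter u j = w[j]'(by omega) := by
    intro j hj
    simp only [letter, hu]
    rw [List.getD_eq_getElem _ _ (by simp [hwl]; omega)]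
    exact List.getElem_dropLast _
  have hV : ∀ j (hj : j < D), letter v j = w[j+1]'(by omega) := by
    intro j hj
    simp only [letter, hv]
    rw [List.getD_eq_getElem _ _ (by simp [hwl]; omega)]
    exact List.getElem_tail _
  refine ⟨?_, ?_, ?_⟩
  · intro j hj
    rw [hV j (by omega), hU (j+1) hj]
  · rw [hV (D-1) (by omega), hU (D-1) (by omega)]
    have := chain'_rel hwc (i := D - 1) (by omega)
    simp only [show D - 1 + 1 = D from by omega] at this ⊢
    exact fun hc => this hc.symm
  · rw [hU 0 (by omega), hV 0 (by omega)]
    exact chain'_rel hwc (i := 0) (by omega)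

theorem ncard_le_mul {α : Type*} [Finite α] {β : Type*} [Fintype β] [DecidableEq β]
    (S T : Set α) (f : α → α) (g : α → β) (c : α → β) (n : ℕ)
    (hn : Fintype.card β = n + 1)
    (hf : ∀ z ∈ S, f z ∈ T)
    (hg : ∀ z ∈ S, g z ≠ c (f z))
    (hinj : ∀ z1 ∈ S, ∀ z2 ∈ S, f z1 = f z2 → g z1 = g z2 → z1 = z2) :
    S.ncard ≤ n * T.ncard := by
  classical
  haveI : Fintype α := Fintype.ofFinite α
  rw [Set.ncard_eq_toFinset_card', Set.ncard_eq_toFinset_card']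
  have himg : S.toFinset.image f ⊆ T.toFinset := by
    intro b hb
    obtain ⟨z, hz, rfl⟩ := Finset.mem_image.1 hb
    exact Set.mem_toFinset.2 (hf z (Set.mem_toFinset.1 hz))
  refine le_trans (Finset.card_le_mul_card_image _ n ?_)
    (Nat.mul_le_mul_left n (Finset.card_le_card himg))
  intro b hb
  have h2 : (S.toFinset.filter fun a => f a = b).card ≤ (Finset.univ.erase (c b)).card := by
    apply Finset.card_le_card_of_injOn g
    · intro z hz
      rw [Finset.mem_coe, Finset.mem_filter, Set.mem_toFinset] at hz
      refine Finset.mem_erase.2 ⟨?_, Finset.mem_univ _⟩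
      rw [← hz.2]; exact hg z hz.1
    · intro z1 h1 z2 h2 hgz
      rw [Finset.mem_coe, Finset.mem_filter, Set.mem_toFinset] at h1 h2
      exact hinj z1 h1.1 z2 h2.1 (h1.2.trans h2.2.symm) hgz
  rwa [Finset.card_erase_of_mem (Finset.mem_univ _), Finset.card_univ, hn,
    Nat.add_sub_cancel] at h2

noncomputable def trimH {d D : ℕ} (e : Edge d D) (t : ℕ) :
    Vertex d D × Vertex d D → Vertex d D × Vertex d D := fun z =>
  if h : ∃ p : List (Vertex d D), IsWalk p z.1 z.2 ∧ p.length = D + 1 ∧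
      p[t-1]? = some e.src ∧ p[t]? = some e.tgt
  then ((h.choose).getD 1 z.1, z.2) else z

noncomputable def trimT {d D : ℕ} (e : Edge d D) (t : ℕ) :
    Vertex d D × Vertex d D → Vertex d D × Vertex d D := fun z =>
  if h : ∃ p : List (Vertex d D), IsWalk p z.1 z.2 ∧ p.length = D + 1 ∧
      p[t-1]? = some e.src ∧ p[t]? = some e.tgt
  then (z.1, (h.choose).getD (D-1) z.2) else z

theorem N_trim_head (hD : 2 ≤ D) (e : Edge d D) {t : ℕ} (ht2 : 2 ≤ t) (htD : t ≤ D) :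
    N e D t ≤ d * N e (D - 1) (t - 1) := by
  classical
  set S : Set (Vertex d D × Vertex d D) := {xy | dist xy.1 xy.2 = D ∧
    ∃ p : List (Vertex d D), IsWalk p xy.1 xy.2 ∧ p.length = D + 1 ∧
      p[t-1]? = some e.src ∧ p[t]? = some e.tgt} with hSdef
  set T : Set (Vertex d D × Vertex d D) := {xy | dist xy.1 xy.2 = D - 1 ∧
    ∃ p : List (Vertex d D), IsWalk p xy.1 xy.2 ∧ p.length = (D - 1) + 1 ∧
      p[(t-1)-1]? = some e.src ∧ p[t-1]? = some e.tgt} with hTdef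
  have key : ∀ z ∈ S, trimH e t z ∈ T ∧ Adj z.1 (trimH e t z).1 ∧ (trimH e t z).2 = z.2 := by
    rintro z ⟨hdist, hQ⟩
    have hfz : trimH e t z = ((hQ.choose).getD 1 z.1, z.2) := dif_pos hQ
    obtain ⟨hw, hwl, hi1, hi2⟩ := hQ.choose_spec
    set p := hQ.choose with hpdef
    have h1p : 1 < p.length := by omega
    have hx' : p[1]? = some (p.getD 1 z.1) := by
      rw [List.getD_eq_getElem _ _ h1p]
      exact List.getElem?_eq_getElem h1p
    set x' : Vertex d D := p.getD 1 z.1 with hx'def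
    have hq : IsWalk p.tail x' z.2 := hw.tail' (by omega) hx'
    have hql : p.tail.length = (D - 1) + 1 := by
      rw [List.length_tail, hwl]; omega
    have hadj : Adj z.1 x' := by
      have h0 : p[0]? = some z.1 := hw.getElem?_zero
      rw [List.getElem?_eq_getElem (by omega : 0 < p.length)] at h0
      rw [List.getElem?_eq_getElem h1p] at hx'
      have := chain'_rel hw.2.2 (i := 0) h1p
      rw [Option.some_inj.1 h0, Option.some_inj.1 hx'] at this
      exact this
    have hdle : dist x' z.2 ≤ D - 1 := dist_le_of_walk hq hql
    have hdge : D - 1 ≤ dist x' z.2 := by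
      obtain ⟨r, hr, hrl⟩ := exists_geodesic hq
      have hwalk : IsWalk (z.1 :: r) z.1 z.2 := hr.cons z.1 hadj
      have := dist_le_of_walk (k := dist x' z.2 + 1) hwalk (by simp [hrl])
      omega
    refine ⟨?_, ?_, ?_⟩
    · rw [hfz]
      refine ⟨by simpa using le_antisymm hdle hdge, p.tail, hq, hql, ?_, ?_⟩
      · rw [List.getElem?_tail, show t - 1 - 1 + 1 = t - 1 by omega]; exact hi1
      · rw [List.getElem?_tail, show t - 1 + 1 = t by omega]; exact hi2
    · rw [hfz]; exact hadj
    · rw [hfz]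
  have hineq := ncard_le_mul S T (trimH e t) (fun z => letter z.1 0)
    (fun b => letter b.1 0) d (by simp) (fun z hz => (key z hz).1)
    ?_ ?_
  · exact hineq
  · intro z hz
    exact (adj_letter_spec (by omega) (key z hz).2.1).2.2
  · intro z1 h1 z2 h2 hfe hge
    have k1 := key z1 h1
    have k2 := key z2 h2
    have h2eq : z1.2 = z2.2 := by rw [← k1.2.2, ← k2.2.2, hfe]
    have hadj1 := (adj_letter_spec (by omega : 1 ≤ D) k1.2.1).1
    have hadj2 := (adj_letter_spec (by omega : 1 ≤ D) k2.2.1).1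
    have h1eq : z1.1 = z2.1 := by
      apply letter_inj
      intro j hj
      match j with
      | 0 => exact hge
      | Nat.succ k =>
        have e1 := hadj1 k (by omega)
        have e2 := hadj2 k (by omega)
        rw [hfe] at e1
        exact e1.symm.trans e2
    exact Prod.ext h1eq h2eq

theorem N_trim_tail (hD : 2 ≤ D) (e : Edge d D) {t : ℕ} (ht1 : 1 ≤ t) (htD : t ≤ D - 1) :
    N e D t ≤ d * N e (D - 1) t := by
  classical
  set S : Set (Vertex d D × Vertex d D) := {xy | dist xy.1 xy.2 = D ∧
    ∃ p : List (Vertex d D), IsWalk p xy.1 xy.2 ∧ p.length = D + 1 ∧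
      p[t-1]? = some e.src ∧ p[t]? = some e.tgt} with hSdef
  set T : Set (Vertex d D × Vertex d D) := {xy | dist xy.1 xy.2 = D - 1 ∧
    ∃ p : List (Vertex d D), IsWalk p xy.1 xy.2 ∧ p.length = (D - 1) + 1 ∧
      p[t-1]? = some e.src ∧ p[t]? = some e.tgt} with hTdef
  have key : ∀ z ∈ S, trimT e t z ∈ T ∧ Adj (trimT e t z).2 z.2 ∧ (trimT e t z).1 = z.1 := by
    rintro z ⟨hdist, hQ⟩
    have hfz : trimT e t z = (z.1, (hQ.choose).getD (D-1) z.2) := dif_pos hQ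
    obtain ⟨hw, hwl, hi1, hi2⟩ := hQ.choose_spec
    set p := hQ.choose with hpdef
    have h1p : D - 1 < p.length := by omega
    have hy' : p[D-1]? = some (p.getD (D-1) z.2) := by
      rw [List.getD_eq_getElem _ _ h1p]
      exact List.getElem?_eq_getElem h1p
    set y' : Vertex d D := p.getD (D-1) z.2 with hy'def
    have hq : IsWalk p.dropLast z.1 y' := by
      refine hw.dropLast' (by omega) ?_
      rwa [show p.length - 2 = D - 1 by omega]
    have hql : p.dropLast.length = (D - 1) + 1 := by
      rw [List.length_dropLast, hwl]; omega
    have hadj : Adj y' z.2 := by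
      have hL : p[D]? = some z.2 := by
        have := hw.getElem?_last
        rwa [show p.length - 1 = D by omega] at this
      rw [List.getElem?_eq_getElem (by omega : D < p.length)] at hL
      rw [List.getElem?_eq_getElem h1p] at hy'
      have := chain'_rel hw.2.2 (i := D - 1) (by omega)
      simp only [show D - 1 + 1 = D from by omega] at this
      rw [Option.some_inj.1 hL, Option.some_inj.1 hy'] at this
      exact this
    have hdle : dist z.1 y' ≤ D - 1 := dist_le_of_walk hq hql
    have hdge : D - 1 ≤ dist z.1 y' := by
      obtain ⟨r, hr, hrl⟩ := exists_geodesic hq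
      have hwalk : IsWalk (r ++ [z.2]) z.1 z.2 := hr.concat z.2 hadj
      have := dist_le_of_walk (k := dist z.1 y' + 1) hwalk (by simp [hrl])
      omega
    refine ⟨?_, ?_, ?_⟩
    · rw [hfz]
      refine ⟨by simpa using le_antisymm hdle hdge, p.dropLast, hq, hql, ?_, ?_⟩
      · rw [List.getElem?_dropLast, if_pos (by omega)]; exact hi1
      · rw [List.getElem?_dropLast, if_pos (by omega)]; exact hi2
    · rw [hfz]; exact hadj
    · rw [hfz]
  have hineq := ncard_le_mul S T (trimT e t) (fun z => letter z.2 (D-1))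
    (fun b => letter b.2 (D-1)) d (by simp) (fun z hz => (key z hz).1)
    ?_ ?_
  · exact hineq
  · intro z hz
    exact (adj_letter_spec (by omega) (key z hz).2.1).2.1
  · intro z1 h1 z2 h2 hfe hge
    have k1 := key z1 h1
    have k2 := key z2 h2
    have h1eq : z1.1 = z2.1 := by rw [← k1.2.2, ← k2.2.2, hfe]
    have hadj1 := (adj_letter_spec (by omega : 1 ≤ D) k1.2.1).1
    have hadj2 := (adj_letter_spec (by omega : 1 ≤ D) k2.2.1).1
    have h2eq : z1.2 = z2.2 := by
      apply letter_inj
      intro j hj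
      rcases eq_or_ne j (D - 1) with hje | hje
      · rw [hje]; exact hge
      · have e1 := hadj1 j (by omega)
        have e2 := hadj2 j (by omega)
        rw [hfe] at e1
        exact e1.trans e2.symm
    exact Prod.ext h1eq h2eq

theorem U_trim (hD : 2 ≤ D) (e : Edge d D) :
    (D - 1) * (∑ t ∈ Finset.Icc 1 D, N e D t)
      ≤ (d * D) * (∑ t ∈ Finset.Icc 1 (D-1), N e (D-1) t) := by
  have step : ∀ t ∈ Finset.Icc 1 D, (D-1) * N e D t ≤
      (t-1) * (d * N e (D-1) (t-1)) + (D-t) * (d * N e (D-1) t) := by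
    intro t ht
    rw [Finset.mem_Icc] at ht
    rcases eq_or_lt_of_le ht.1 with h1 | h1
    · have ht1 : t = 1 := h1.symm
      subst ht1
      have hb := N_trim_tail hD e (le_refl 1) (by omega)
      simpa using Nat.mul_le_mul_left (D-1) hb
    · rcases eq_or_lt_of_le ht.2 with h2 | h2
      · subst h2
        have ha := N_trim_head (t := t) hD e (by omega) (le_refl t)
        simpa using Nat.mul_le_mul_left (t-1) ha
      · have ha := N_trim_head (t := t) hD e (by omega) (by omega)
        have hb := N_trim_tail (t := t) hD e (by omega) (by omega)
        calc (D-1) * N e D t = (t-1) * N e D t + (D-t) * N e D t := by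
              rw [← Nat.add_mul]; congr 1; omega
          _ ≤ (t-1) * (d * N e (D-1) (t-1)) + (D-t) * (d * N e (D-1) t) :=
              Nat.add_le_add (Nat.mul_le_mul_left _ ha) (Nat.mul_le_mul_left _ hb)
  have hA : ∑ t ∈ Finset.Icc 1 D, (t-1) * (d * N e (D-1) (t-1))
      = ∑ i ∈ Finset.range (D-1), (i+1) * (d * N e (D-1) (i+1)) := by
    rw [← Finset.Ico_add_one_right_eq_Icc, Finset.sum_Ico_eq_sum_range]
    have hr : D + 1 - 1 = (D-1) + 1 := by omega
    rw [hr, Finset.sum_range_succ']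
    have h0 : (1 + 0 - 1) * (d * N e (D-1) (1 + 0 - 1)) = 0 := by simp
    rw [h0, Nat.add_zero]
    apply Finset.sum_congr rfl
    intro i _
    rw [show 1 + (i + 1) - 1 = i + 1 from by omega]
  have hB : ∑ t ∈ Finset.Icc 1 D, (D-t) * (d * N e (D-1) t)
      = ∑ i ∈ Finset.range (D-1), (D-1-i) * (d * N e (D-1) (i+1)) := by
    rw [← Finset.Ico_add_one_right_eq_Icc, Finset.sum_Ico_eq_sum_range]
    have hr : D + 1 - 1 = (D-1) + 1 := by omega
    rw [hr, Finset.sum_range_succ]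
    have h0 : (D - (1 + (D-1))) * (d * N e (D-1) (1 + (D-1))) = 0 := by
      have : D - (1 + (D-1)) = 0 := by omega
      rw [this, Nat.zero_mul]
    rw [h0, Nat.add_zero]
    apply Finset.sum_congr rfl
    intro i _
    rw [show D - (1 + i) = D - 1 - i from by omega, show 1 + i = i + 1 from by omega]
  have hU : ∑ t ∈ Finset.Icc 1 (D-1), N e (D-1) t
      = ∑ i ∈ Finset.range (D-1), N e (D-1) (i+1) := by
    rw [← Finset.Ico_add_one_right_eq_Icc, Finset.sum_Ico_eq_sum_range]
    have hr : D - 1 + 1 - 1 = D - 1 := by omega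
    rw [hr]
    apply Finset.sum_congr rfl
    intro i _
    rw [show 1 + i = i + 1 from by omega]
  calc (D - 1) * (∑ t ∈ Finset.Icc 1 D, N e D t)
      = ∑ t ∈ Finset.Icc 1 D, (D-1) * N e D t := Finset.mul_sum _ _ _
    _ ≤ ∑ t ∈ Finset.Icc 1 D, ((t-1) * (d * N e (D-1) (t-1)) + (D-t) * (d * N e (D-1) t)) :=
        Finset.sum_le_sum step
    _ = ∑ t ∈ Finset.Icc 1 D, (t-1) * (d * N e (D-1) (t-1))
        + ∑ t ∈ Finset.Icc 1 D, (D-t) * (d * N e (D-1) t) := Finset.sum_add_distrib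
    _ = ∑ i ∈ Finset.range (D-1), ((i+1) * (d * N e (D-1) (i+1))
        + (D-1-i) * (d * N e (D-1) (i+1))) := by
        rw [hA, hB, Finset.sum_add_distrib]
    _ = ∑ i ∈ Finset.range (D-1), (d * D) * N e (D-1) (i+1) := by
        apply Finset.sum_congr rfl
        intro i hi
        rw [Finset.mem_range] at hi
        rw [← Nat.add_mul, show (i+1) + (D-1-i) = D from by omega]
        ring
    _ = (d * D) * ∑ t ∈ Finset.Icc 1 (D-1), N e (D-1) t := by
        rw [hU, Finset.mul_sum]


end Kautz

/-- Trimming inequality: for `d ≥ 2`, `D ≥ 2` and any directed edge `e` of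
`K(d,D)`, `U_{D−1}(e) ≥ ((D−1)/(d·D))·U_D(e)`. -/
theorem statement6 (d D : ℕ) (hd : 2 ≤ d) (hD : 2 ≤ D) (e : Kautz.Edge d D) :
    (((D : ℝ) - 1) / ((d : ℝ) * (D : ℝ))) * (Kautz.U e D : ℝ)
      ≤ (Kautz.U e (D - 1) : ℝ) := by
  have key : (D - 1) * Kautz.U e D ≤ (d * D) * Kautz.U e (D - 1) := Kautz.U_trim hD e
  have hd0 : (0:ℝ) < (d:ℝ) * (D:ℝ) := by
    have := Nat.mul_pos (show 0 < d by omega) (show 0 < D by omega)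
    exact_mod_cast this
  rw [div_mul_eq_mul_div, div_le_iff₀ hd0]
  have h := (Nat.cast_le (α := ℝ)).2 key
  push_cast [Nat.cast_sub (show 1 ≤ D by omega)] at h
  linarith
end
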